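/- arXiv:1603.09189 — 8 statements merged into one kernel-verified Lean document; each statement's English description precedes it below -/
import Mathlib

section
/- Let ω, δ, ε > 0 with ε ≤ 1. For any function η ∈ L²(ℝ²) whose Fourier transform η̂ is supported in the ball B_δ(ω,0) ⊆ ℝ², one has ∫_{ℝ²} |η̂(k)| dk ≤ 2√π · ε · (log(1 + δ²ε⁻²))^{1/2} · |||η|||, where |||η|||² = ∫_{ℝ²} (1 + ε⁻²((k₁−ω)² + k₂²)) |η̂(k)|² dk. -/
open MeasureTheory Set Real

private lemma rpow_two' (x : ℝ) : x ^ (2:ℝ) = x ^ 2 := by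
  rw [show (2:ℝ) = ((2:ℕ):ℝ) by norm_num, Real.rpow_natCast]

private lemma oneD_integral (ε R : ℝ) (hε : 0 < ε) (hR : 0 < R) :
    ∫ r in (0:ℝ)..R, r * (1 + (ε^2)⁻¹ * r^2)⁻¹
      = ε^2/2 * Real.log (1 + (ε^2)⁻¹ * R^2) := by
  have hε2 : (0:ℝ) < ε^2 := by positivity
  have hpos : ∀ r : ℝ, 0 < 1 + (ε^2)⁻¹ * r^2 := fun r => by positivity
  have hderiv : ∀ r ∈ Set.uIcc (0:ℝ) R,
      HasDerivAt (fun r => ε^2/2 * Real.log (1 + (ε^2)⁻¹ * r^2))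
        (r * (1 + (ε^2)⁻¹ * r^2)⁻¹) r := by
    intro r _
    have h1 : HasDerivAt (fun r : ℝ => 1 + (ε^2)⁻¹ * r^2) ((ε^2)⁻¹ * (2*r)) r := by
      have := (hasDerivAt_pow 2 r).const_mul ((ε^2)⁻¹)
      simpa [mul_comm] using this.const_add 1
    have h2 := (Real.hasDerivAt_log (hpos r).ne').comp r h1
    have h3 : HasDerivAt (fun y => ε^2/2 * Real.log (1 + (ε^2)⁻¹ * y^2))
        (ε^2/2 * ((1 + (ε^2)⁻¹ * r^2)⁻¹ * ((ε^2)⁻¹ * (2 * r)))) r := h2.const_mul (ε^2/2)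
    convert h3 using 1
    field_simp
  have hint : IntervalIntegrable (fun r => r * (1 + (ε^2)⁻¹ * r^2)⁻¹) volume 0 R := by
    apply Continuous.intervalIntegrable
    exact continuous_id.mul ((continuous_const.add
      (continuous_const.mul (continuous_pow 2))).inv₀ (fun r => (hpos r).ne'))
  rw [intervalIntegral.integral_eq_sub_of_hasDerivAt hderiv hint]
  simp

private lemma twoD_integral (ε R : ℝ) (hε : 0 < ε) (hR : 0 < R) :
    ∫ k : ℝ × ℝ, Set.indicator {p : ℝ × ℝ | p.1^2 + p.2^2 < R^2}
        (fun p => (1 + (ε^2)⁻¹ * (p.1^2 + p.2^2))⁻¹) k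
      = π * ε^2 * Real.log (1 + (ε^2)⁻¹ * R^2) := by
  set H : ℝ × ℝ → ℝ := Set.indicator {p : ℝ × ℝ | p.1^2 + p.2^2 < R^2}
        (fun p => (1 + (ε^2)⁻¹ * (p.1^2 + p.2^2))⁻¹) with hH
  set φ : ℝ → ℝ := Set.indicator (Set.Ioo 0 R) (fun r => r * (1 + (ε^2)⁻¹ * r^2)⁻¹) with hφ
  rw [← integral_comp_polarCoord_symm H]
  have hcongr : ∀ p ∈ polarCoord.target, p.1 • H (polarCoord.symm p) = φ p.1 := by
    rintro ⟨r, θ⟩ hp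
    have hr : 0 < r := hp.1
    have hsq : (r * Real.cos θ)^2 + (r * Real.sin θ)^2 = r^2 := by
      have := Real.sin_sq_add_cos_sq θ; nlinarith [this]
    simp only [hH, polarCoord, OpenPartialHomeomorph.mk_coe_symm, PartialEquiv.coe_symm_mk, hφ]
    by_cases h : r < R
    · rw [Set.indicator_of_mem, Set.indicator_of_mem (Set.mem_Ioo.2 ⟨hr, h⟩)]
      · simp only [hsq, smul_eq_mul]
      · simp only [Set.mem_setOf_eq, hsq]
        exact pow_lt_pow_left₀ h hr.le (by norm_num) |>.trans_le le_rfl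
    · rw [Set.indicator_of_notMem, Set.indicator_of_notMem (by simp [hr, h] : r ∉ Set.Ioo 0 R)]
      · simp
      · simp only [Set.mem_setOf_eq, hsq, not_lt]
        exact pow_le_pow_left₀ hR.le (not_lt.1 h) 2
  rw [setIntegral_congr_fun polarCoord.open_target.measurableSet hcongr]
  have htarget : polarCoord.target = Set.Ioi (0:ℝ) ×ˢ Set.Ioo (-π) π := rfl
  rw [htarget]
  have : ∫ p in (Set.Ioi (0:ℝ)) ×ˢ (Set.Ioo (-π) π), φ p.1
      = (∫ r in Set.Ioi (0:ℝ), φ r) * ∫ θ in Set.Ioo (-π) π, (1:ℝ) := by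
    rw [show (volume : Measure (ℝ × ℝ)) = (volume : Measure ℝ).prod volume from
      (Measure.volume_eq_prod ℝ ℝ), ← Measure.prod_restrict, ← integral_prod_mul]
    simp
  rw [this]
  have h1 : ∫ θ in Set.Ioo (-π) π, (1:ℝ) = 2 * π := by
    simp [Real.volume_Ioo]
    rw [max_eq_left (by positivity)]
    ring
  have h2 : ∫ r in Set.Ioi (0:ℝ), φ r = ε^2/2 * Real.log (1 + (ε^2)⁻¹ * R^2) := by
    rw [hφ, setIntegral_indicator measurableSet_Ioo,
      Set.inter_eq_self_of_subset_right Set.Ioo_subset_Ioi_self,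
      ← integral_Ioc_eq_integral_Ioo, ← intervalIntegral.integral_of_le hR.le]
    exact oneD_integral ε R hε hR
  rw [h1, h2]; ring

/-- (Proposition `sup estimate`.) If `η̂` is supported in the ball
`B_δ(ω,0) ⊆ ℝ²`, then its `L¹` norm is controlled by `2√π ε (log(1+δ²ε⁻²))^{1/2}`
times the scaled norm `|||η|||`. -/
theorem l1_bound_of_support_in_ball (ω δ ε : ℝ) (hω : 0 < ω) (hδ : 0 < δ)
    (hε : 0 < ε) (hε1 : ε ≤ 1) (ηhat : ℝ × ℝ → ℂ) (hmeas : Measurable ηhat)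
    (hL2 : MemLp ηhat 2 (volume : Measure (ℝ × ℝ)))
    (hsupp : ∀ k : ℝ × ℝ, δ ≤ dist k ((ω, 0) : ℝ × ℝ) → ηhat k = 0) :
    (∫ k : ℝ × ℝ, ‖ηhat k‖) ≤
      2 * Real.sqrt Real.pi * ε * Real.sqrt (Real.log (1 + δ ^ 2 * (ε ^ 2)⁻¹)) *
        Real.sqrt (∫ k : ℝ × ℝ,
          (1 + (ε ^ 2)⁻¹ * ((k.1 - ω) ^ 2 + k.2 ^ 2)) * ‖ηhat k‖ ^ 2) := by
  have hε2 : (0:ℝ) < ε ^ 2 := by positivity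
  set c : ℝ × ℝ := (ω, 0) with hc
  set w : ℝ × ℝ → ℝ := fun k => 1 + (ε ^ 2)⁻¹ * ((k.1 - ω) ^ 2 + k.2 ^ 2) with hw
  have hw1 : ∀ k, 1 ≤ w k := fun k => le_add_of_nonneg_right (by positivity)
  have hwpos : ∀ k, 0 < w k := fun k => lt_of_lt_of_le one_pos (hw1 k)
  have hwcont : Continuous w := by
    apply continuous_const.add
    exact continuous_const.mul (((continuous_fst.sub continuous_const).pow 2).add
      (continuous_snd.pow 2))
  set S : Set (ℝ × ℝ) := Metric.ball c δ with hS
  set S₂ : Set (ℝ × ℝ) := {k : ℝ × ℝ | (k.1 - ω)^2 + k.2^2 < 2 * δ^2} with hS₂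
  have hS₂meas : MeasurableSet S₂ := by
    apply measurableSet_lt
    · exact (((continuous_fst.sub continuous_const).pow 2).add (continuous_snd.pow 2)).measurable
    · exact measurable_const
  have hSsub : S ⊆ S₂ := by
    intro k hk
    rw [hS, Metric.mem_ball, Prod.dist_eq, hc] at hk
    have h1 : |k.1 - ω| < δ := by simpa [Real.dist_eq] using lt_of_le_of_lt (le_max_left _ _) hk
    have h2 : |k.2| < δ := by simpa [Real.dist_eq] using lt_of_le_of_lt (le_max_right _ _) hk
    have := abs_lt.1 h1; have := abs_lt.1 h2
    simp only [hS₂, Set.mem_setOf_eq]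
    nlinarith [sq_abs (k.1 - ω), sq_abs k.2]
  have hS₂bdd : S₂ ⊆ Metric.ball c (2 * δ) := by
    intro k hk
    simp only [hS₂, Set.mem_setOf_eq] at hk
    rw [Metric.mem_ball, Prod.dist_eq, hc]
    have h1 : |k.1 - ω| < 2 * δ := by
      rw [abs_lt]; constructor <;> nlinarith [sq_nonneg k.2, sq_abs (k.1 - ω)]
    have h2 : |k.2 - 0| < 2 * δ := by
      rw [sub_zero, abs_lt]; constructor <;> nlinarith [sq_nonneg (k.1 - ω), sq_abs k.2]
    simp only [Real.dist_eq]
    exact max_lt h1 h2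
  have hS₂vol : volume S₂ < ⊤ :=
    lt_of_le_of_lt (measure_mono hS₂bdd) measure_ball_lt_top
  -- the two Cauchy-Schwarz factors
  set f : ℝ × ℝ → ℝ := S.indicator (fun k => (Real.sqrt (w k))⁻¹) with hf
  set g : ℝ × ℝ → ℝ := fun k => Real.sqrt (w k) * ‖ηhat k‖ with hg
  have hzero : ∀ k, k ∉ S → ηhat k = 0 := by
    intro k hk
    exact hsupp k (by simpa [hS, Metric.mem_ball, not_lt] using hk)
  have hfg : ∀ k, ‖ηhat k‖ = f k * g k := by
    intro k
    by_cases hk : k ∈ S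
    · rw [hf, Set.indicator_of_mem hk, hg]
      rw [← mul_assoc, inv_mul_cancel₀ (Real.sqrt_ne_zero'.2 (hwpos k)), one_mul]
    · rw [hf, Set.indicator_of_notMem hk, zero_mul, hzero k hk, norm_zero]
  have hf_sq : ∀ k, f k ^ (2:ℝ) = S.indicator (fun k => (w k)⁻¹) k := by
    intro k
    rw [rpow_two']
    by_cases hk : k ∈ S
    · rw [hf, Set.indicator_of_mem hk, Set.indicator_of_mem hk,
        ← Real.sqrt_inv, Real.sq_sqrt (inv_nonneg.2 (hwpos k).le)]
    · rw [hf, Set.indicator_of_notMem hk, Set.indicator_of_notMem hk]; norm_num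
  have hg_sq : ∀ k, g k ^ (2:ℝ) = w k * ‖ηhat k‖ ^ 2 := by
    intro k
    rw [rpow_two', hg, mul_pow, Real.sq_sqrt (hwpos k).le]
  -- measurability
  have hfmeas : Measurable f :=
    ((hwcont.sqrt.measurable).inv).indicator measurableSet_ball
  have hgmeas : Measurable g := hwcont.sqrt.measurable.mul hmeas.norm
  -- integrability of the indicator integrands
  have hbound_int : Integrable (S₂.indicator (fun _ : ℝ × ℝ => (1:ℝ))) := by
    rw [integrable_indicator_iff hS₂meas]
    exact integrableOn_const hS₂vol.ne
  have hwinv_le : ∀ (T : Set (ℝ × ℝ)), T ⊆ S₂ → ∀ k,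
      ‖T.indicator (fun k => (w k)⁻¹) k‖ ≤ S₂.indicator (fun _ => (1:ℝ)) k := by
    intro T hT k
    by_cases hk : k ∈ T
    · rw [Set.indicator_of_mem hk, Set.indicator_of_mem (hT hk)]
      rw [Real.norm_eq_abs, abs_of_nonneg (inv_nonneg.2 (hwpos k).le)]
      exact inv_le_one_of_one_le₀ (hw1 k)
    · rw [Set.indicator_of_notMem hk]
      simp only [norm_zero]
      exact Set.indicator_nonneg (fun _ _ => zero_le_one) k
  have hint_S : Integrable (S.indicator (fun k => (w k)⁻¹)) :=
    hbound_int.mono' ((hwcont.measurable.inv).indicator measurableSet_ball).aestronglyMeasurable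
      (Filter.Eventually.of_forall (hwinv_le S hSsub))
  have hint_S₂ : Integrable (S₂.indicator (fun k => (w k)⁻¹)) :=
    hbound_int.mono' ((hwcont.measurable.inv).indicator hS₂meas).aestronglyMeasurable
      (Filter.Eventually.of_forall (hwinv_le S₂ (le_refl S₂)))
  -- MemLp for Cauchy-Schwarz
  have hofReal2 : ENNReal.ofReal (2:ℝ) = 2 := by norm_num
  have hfL2 : MemLp f (ENNReal.ofReal (2:ℝ)) volume := by
    rw [hofReal2]
    refine (memLp_two_iff_integrable_sq hfmeas.aestronglyMeasurable).2 ?_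
    have : (fun x => f x ^ 2) = S.indicator (fun k => (w k)⁻¹) := by
      funext k; rw [← rpow_two', hf_sq k]
    rwa [this]
  have hnorm2 : Integrable (fun k => ‖ηhat k‖ ^ 2) := by
    have := (memLp_two_iff_integrable_sq hmeas.norm.aestronglyMeasurable).1 hL2.norm
    exact this
  have hC : (0:ℝ) ≤ Real.sqrt (1 + (ε^2)⁻¹ * (2 * δ^2)) := Real.sqrt_nonneg _
  have hgle : ∀ k, ‖g k‖ ≤ ‖Real.sqrt (1 + (ε^2)⁻¹ * (2 * δ^2)) * ‖ηhat k‖‖ := by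
    intro k
    by_cases hk : k ∈ S
    · have hwle : w k ≤ 1 + (ε^2)⁻¹ * (2 * δ^2) := by
        have := hSsub hk
        simp only [hS₂, Set.mem_setOf_eq] at this
        simp only [hw]
        have : (ε^2)⁻¹ * ((k.1 - ω)^2 + k.2^2) ≤ (ε^2)⁻¹ * (2 * δ^2) :=
          mul_le_mul_of_nonneg_left this.le (inv_nonneg.2 hε2.le)
        linarith
      rw [hg, Real.norm_eq_abs, Real.norm_eq_abs,
        abs_of_nonneg (mul_nonneg (Real.sqrt_nonneg _) (norm_nonneg _)),
        abs_of_nonneg (mul_nonneg hC (norm_nonneg _))]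
      exact mul_le_mul_of_nonneg_right (Real.sqrt_le_sqrt hwle) (norm_nonneg _)
    · simp [hg, hzero k hk, mul_nonneg hC (norm_nonneg (ηhat k))]
  have hgL2 : MemLp g (ENNReal.ofReal (2:ℝ)) volume := by
    rw [hofReal2]
    exact MemLp.of_le (hL2.norm.const_mul _) hgmeas.aestronglyMeasurable
      (Filter.Eventually.of_forall hgle)
  -- Cauchy-Schwarz
  have hpq : Real.HolderConjugate 2 2 := Real.HolderConjugate.two_two
  have hCS := integral_mul_le_Lp_mul_Lq_of_nonneg hpq
    (Filter.Eventually.of_forall (fun k => Set.indicator_nonneg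
      (fun k _ => inv_nonneg.2 (Real.sqrt_nonneg _)) k))
    (Filter.Eventually.of_forall (fun k =>
      mul_nonneg (Real.sqrt_nonneg _) (norm_nonneg _)))
    hfL2 hgL2
  rw [show (∫ k : ℝ × ℝ, ‖ηhat k‖) = ∫ k : ℝ × ℝ, f k * g k from
    integral_congr_ae (Filter.Eventually.of_forall hfg)]
  refine le_trans hCS ?_
  set L : ℝ := Real.log (1 + δ ^ 2 * (ε ^ 2)⁻¹) with hL
  have hx : (0:ℝ) < δ ^ 2 * (ε ^ 2)⁻¹ := by positivity
  have hLnn : 0 ≤ L := Real.log_nonneg (by linarith)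
  -- identify ∫ g^2
  have hBeq : (∫ k : ℝ × ℝ, g k ^ (2:ℝ)) = ∫ k : ℝ × ℝ, w k * ‖ηhat k‖ ^ 2 :=
    integral_congr_ae (Filter.Eventually.of_forall hg_sq)
  have hBnn : 0 ≤ ∫ k : ℝ × ℝ, w k * ‖ηhat k‖ ^ 2 :=
    integral_nonneg (fun k => mul_nonneg (hwpos k).le (by positivity))
  -- bound ∫ f^2
  have hAeq : (∫ k : ℝ × ℝ, f k ^ (2:ℝ)) = ∫ k : ℝ × ℝ, S.indicator (fun k => (w k)⁻¹) k :=
    integral_congr_ae (Filter.Eventually.of_forall hf_sq)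
  set R : ℝ := Real.sqrt 2 * δ with hR
  have hRpos : 0 < R := by positivity
  have hR2 : R ^ 2 = 2 * δ ^ 2 := by
    rw [hR, mul_pow, Real.sq_sqrt (by norm_num : (0:ℝ) ≤ 2)]
  have htrans : (∫ k : ℝ × ℝ, S₂.indicator (fun k => (w k)⁻¹) k)
      = π * ε ^ 2 * Real.log (1 + (ε ^ 2)⁻¹ * R ^ 2) := by
    rw [← twoD_integral ε R hε hRpos]
    rw [show (∫ k : ℝ × ℝ, Set.indicator {p : ℝ × ℝ | p.1^2 + p.2^2 < R^2}
        (fun p => (1 + (ε^2)⁻¹ * (p.1^2 + p.2^2))⁻¹) k)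
      = ∫ k : ℝ × ℝ, Set.indicator {p : ℝ × ℝ | p.1^2 + p.2^2 < R^2}
        (fun p => (1 + (ε^2)⁻¹ * (p.1^2 + p.2^2))⁻¹) (k - c) from
      (integral_sub_right_eq_self _ c).symm]
    refine integral_congr_ae (Filter.Eventually.of_forall (fun k => ?_))
    dsimp only
    have h1 : (k - c).1 = k.1 - ω := by simp [hc]
    have h2 : (k - c).2 = k.2 := by simp [hc]
    by_cases hk : k ∈ S₂
    · rw [Set.indicator_of_mem hk, Set.indicator_of_mem]
      · simp only [h1, h2, hw]
      · simp only [Set.mem_setOf_eq, h1, h2, hR2]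
        simpa [hS₂] using hk
    · rw [Set.indicator_of_notMem hk, Set.indicator_of_notMem]
      simp only [Set.mem_setOf_eq, h1, h2, hR2]
      simpa [hS₂] using hk
  have hlog : Real.log (1 + (ε ^ 2)⁻¹ * R ^ 2) ≤ 2 * L := by
    rw [hR2, hL]
    have h1 : (0:ℝ) < 1 + (ε ^ 2)⁻¹ * (2 * δ ^ 2) := by positivity
    have h2 : 1 + (ε ^ 2)⁻¹ * (2 * δ ^ 2) ≤ (1 + δ ^ 2 * (ε ^ 2)⁻¹) ^ 2 := by
      nlinarith [sq_nonneg (δ ^ 2 * (ε ^ 2)⁻¹)]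
    calc Real.log (1 + (ε ^ 2)⁻¹ * (2 * δ ^ 2))
        ≤ Real.log ((1 + δ ^ 2 * (ε ^ 2)⁻¹) ^ 2) := Real.log_le_log h1 h2
      _ = 2 * Real.log (1 + δ ^ 2 * (ε ^ 2)⁻¹) := by
          rw [show ((1 + δ ^ 2 * (ε ^ 2)⁻¹) ^ 2 : ℝ) = (1 + δ ^ 2 * (ε ^ 2)⁻¹) ^ (2:ℕ) from rfl,
            Real.log_pow]
          norm_num
  have hA : (∫ k : ℝ × ℝ, f k ^ (2:ℝ)) ≤ 2 * π * ε ^ 2 * L := by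
    rw [hAeq]
    calc (∫ k : ℝ × ℝ, S.indicator (fun k => (w k)⁻¹) k)
        ≤ ∫ k : ℝ × ℝ, S₂.indicator (fun k => (w k)⁻¹) k := by
          refine integral_mono hint_S hint_S₂ (fun k => ?_)
          exact Set.indicator_le_indicator_of_subset hSsub
            (fun k => inv_nonneg.2 (hwpos k).le) k
      _ = π * ε ^ 2 * Real.log (1 + (ε ^ 2)⁻¹ * R ^ 2) := htrans
      _ ≤ π * ε ^ 2 * (2 * L) := by
          refine mul_le_mul_of_nonneg_left hlog (by positivity)
      _ = 2 * π * ε ^ 2 * L := by ring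
  have hAnn : 0 ≤ ∫ k : ℝ × ℝ, f k ^ (2:ℝ) := by
    rw [hAeq]
    exact integral_nonneg (Set.indicator_nonneg (fun k _ => inv_nonneg.2 (hwpos k).le))
  -- conclude
  have hfac : (∫ k : ℝ × ℝ, f k ^ (2:ℝ)) ^ ((1:ℝ)/2) ≤ 2 * Real.sqrt π * ε * Real.sqrt L := by
    rw [← Real.sqrt_eq_rpow]
    have hsq : 2 * π * ε ^ 2 * L ≤ (2 * Real.sqrt π * ε * Real.sqrt L) ^ 2 := by
      have e1 : (2 * Real.sqrt π * ε * Real.sqrt L) ^ 2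
          = 4 * (Real.sqrt π ^ 2) * ε ^ 2 * (Real.sqrt L ^ 2) := by ring
      rw [e1, Real.sq_sqrt Real.pi_nonneg, Real.sq_sqrt hLnn]
      nlinarith [Real.pi_nonneg, sq_nonneg ε, hLnn, mul_nonneg (mul_nonneg Real.pi_nonneg (sq_nonneg ε)) hLnn]
    calc Real.sqrt (∫ k : ℝ × ℝ, f k ^ (2:ℝ)) ≤ Real.sqrt ((2 * Real.sqrt π * ε * Real.sqrt L) ^ 2) :=
        Real.sqrt_le_sqrt (hA.trans hsq)
      _ = 2 * Real.sqrt π * ε * Real.sqrt L := Real.sqrt_sq (by positivity)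
  have hfac2 : (∫ k : ℝ × ℝ, g k ^ (2:ℝ)) ^ ((1:ℝ)/2)
      = Real.sqrt (∫ k : ℝ × ℝ, w k * ‖ηhat k‖ ^ 2) := by
    rw [hBeq, ← Real.sqrt_eq_rpow]
  rw [hfac2]
  exact mul_le_mul_of_nonneg_right hfac (Real.sqrt_nonneg _) |>.trans
    (le_of_eq (by rw [hw]))
end

section
/- Fix 0 < β < 1/3 and let f(s) = s·coth(s) (with f(0) = 1). Then the function c²(s) = (1 + βs²)/f(s) defined for s ≥ 0 attains a global minimum at a unique point ω > 0; in particular c²(s) > c²(ω) for all s ≥ 0, s ≠ ω. -/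
/-- `f(s) = s coth s`, extended continuously by `f(0) = 1`. -/
noncomputable def fcoth (s : ℝ) : ℝ := if s = 0 then 1 else s * (Real.cosh s / Real.sinh s)

open Real Set Filter Topology

/-- Numerator of `φ`, the rescaled derivative of the squared wave speed. -/
noncomputable def Nph (β s : ℝ) : ℝ :=
  2*β*s^2*Real.cosh s*Real.sinh s - (1+β*s^2)*(Real.sinh s*Real.cosh s - s)

/-- `φ(s) = (c²)'(s) · f(s)²/(2s)`. -/
noncomputable def phiA (β s : ℝ) : ℝ := Nph β s / (2*s*Real.sinh s^2)

/-- The key positive combination `G`. -/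
noncomputable def Gd (s : ℝ) : ℝ :=
  Real.sinh s^2*Real.cosh s + s*Real.sinh s - 2*s^2*Real.cosh s

/-- `c²` written without the `if`. -/
noncomputable def c2e (β s : ℝ) : ℝ := (1+β*s^2)*Real.sinh s/(s*Real.cosh s)

lemma cosh_gt_aux {x : ℝ} (hx : 0 < x) : 1 + x^2/2 < Real.cosh x := by
  have hd : ∀ y : ℝ, HasDerivAt (fun z => Real.cosh z - 1 - z^2/2) (Real.sinh y - y) y := by
    intro y
    have h := ((Real.hasDerivAt_cosh y).sub_const 1).sub ((hasDerivAt_pow 2 y).div_const 2)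
    refine h.congr_deriv ?_
    push_cast
    ring
  have hm : StrictMonoOn (fun z => Real.cosh z - 1 - z^2/2) (Set.Ici 0) := by
    refine strictMonoOn_of_deriv_pos (convex_Ici 0) ?_ ?_
    · exact fun y _ => ((hd y).continuousAt).continuousWithinAt
    · intro y hy
      rw [interior_Ici, Set.mem_Ioi] at hy
      rw [(hd y).deriv, sub_pos]
      exact Real.self_lt_sinh_iff.2 hy
  have := hm (Set.self_mem_Ici) (Set.mem_Ici.2 hx.le) hx
  simp only [Real.cosh_zero] at this
  nlinarith [this]

lemma sinh_gt_aux {x : ℝ} (hx : 0 < x) : x + x^3/6 < Real.sinh x := by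
  have hd : ∀ y : ℝ, HasDerivAt (fun z => Real.sinh z - z - z^3/6)
      (Real.cosh y - 1 - y^2/2) y := by
    intro y
    have h := (((Real.hasDerivAt_sinh y).sub (hasDerivAt_id' y)).sub
      ((hasDerivAt_pow 3 y).div_const 6))
    refine h.congr_deriv ?_
    push_cast
    ring
  have hm : StrictMonoOn (fun z => Real.sinh z - z - z^3/6) (Set.Ici 0) := by
    refine strictMonoOn_of_deriv_pos (convex_Ici 0) ?_ ?_
    · exact fun y _ => ((hd y).continuousAt).continuousWithinAt
    · intro y hy
      rw [interior_Ici, Set.mem_Ioi] at hy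
      rw [(hd y).deriv]
      have := cosh_gt_aux hy
      linarith
  have := hm (Set.self_mem_Ici) (Set.mem_Ici.2 hx.le) hx
  simp only [Real.sinh_zero] at this
  nlinarith [this]

lemma sinh_ge_aux {x : ℝ} (hx : 0 ≤ x) : x + x^3/6 ≤ Real.sinh x := by
  rcases eq_or_lt_of_le hx with h | h
  · simp [← h]
  · exact (sinh_gt_aux h).le

lemma sinh_le_mul_cosh {x : ℝ} (hx : 0 ≤ x) : Real.sinh x ≤ x * Real.cosh x := by
  have hd : ∀ y : ℝ, HasDerivAt (fun z => z * Real.cosh z - Real.sinh z)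
      (y * Real.sinh y) y := by
    intro y
    have h := ((hasDerivAt_id' y).mul (Real.hasDerivAt_cosh y)).sub (Real.hasDerivAt_sinh y)
    refine h.congr_deriv ?_
    ring
  have hm : StrictMonoOn (fun z => z * Real.cosh z - Real.sinh z) (Set.Ici 0) := by
    refine strictMonoOn_of_deriv_pos (convex_Ici 0) ?_ ?_
    · exact fun y _ => ((hd y).continuousAt).continuousWithinAt
    · intro y hy
      rw [interior_Ici, Set.mem_Ioi] at hy
      rw [(hd y).deriv]
      exact mul_pos hy (Real.sinh_pos_iff.2 hy)
  rcases eq_or_lt_of_le hx with h | h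
  · simp [← h]
  · have := hm (Set.self_mem_Ici) (Set.mem_Ici.2 h.le) h
    simp only [Real.sinh_zero, Real.cosh_zero] at this
    nlinarith [this]

lemma mul_cosh_sub_sinh_le {x : ℝ} (hx : 0 ≤ x) :
    x * Real.cosh x - Real.sinh x ≤ x^3/3 * Real.cosh x := by
  have hd : ∀ y : ℝ, HasDerivAt (fun z => z^3/3 * Real.cosh z + Real.sinh z - z * Real.cosh z)
      (y * (y * Real.cosh y - Real.sinh y) + y^3/3 * Real.sinh y) y := by
    intro y
    have h := ((((hasDerivAt_pow 3 y).div_const 3).mul (Real.hasDerivAt_cosh y)).add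
      (Real.hasDerivAt_sinh y)).sub ((hasDerivAt_id' y).mul (Real.hasDerivAt_cosh y))
    refine h.congr_deriv ?_
    push_cast
    ring
  have hm : MonotoneOn (fun z => z^3/3 * Real.cosh z + Real.sinh z - z * Real.cosh z)
      (Set.Ici 0) := by
    refine monotoneOn_of_deriv_nonneg (convex_Ici 0) ?_ ?_ ?_
    · exact fun y _ => ((hd y).continuousAt).continuousWithinAt
    · exact fun y _ => ((hd y).differentiableAt).differentiableWithinAt
    · intro y hy
      rw [interior_Ici, Set.mem_Ioi] at hy
      rw [(hd y).deriv]
      have h1 : Real.sinh y ≤ y * Real.cosh y := sinh_le_mul_cosh hy.le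
      have h2 : 0 ≤ Real.sinh y := Real.sinh_nonneg_iff.2 hy.le
      nlinarith [mul_nonneg hy.le (sub_nonneg.2 h1), mul_nonneg (pow_nonneg hy.le 3) h2]
  have := hm (Set.self_mem_Ici) (Set.mem_Ici.2 hx) hx
  simp only [Real.sinh_zero, Real.cosh_zero] at this
  nlinarith [this]

lemma Gd_pos {x : ℝ} (hx : 0 < x) : 0 < Gd x := by
  unfold Gd
  have h1 : x + x^3/6 ≤ Real.sinh x := sinh_ge_aux hx.le
  have h2 : x * Real.cosh x - Real.sinh x ≤ x^3/3 * Real.cosh x := mul_cosh_sub_sinh_le hx.le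
  have h3 : 0 < Real.cosh x := Real.cosh_pos x
  have h4 : (x + x^3/6)^2 ≤ Real.sinh x^2 := by
    apply pow_le_pow_left₀ (by positivity) h1
  nlinarith [mul_pos (pow_pos hx 6) h3,
    mul_le_mul_of_nonneg_left h4 h3.le,
    mul_le_mul_of_nonneg_left h2 hx.le]

lemma hasDerivAt_Nph (β s : ℝ) : HasDerivAt (Nph β)
    (4*β*s*Real.cosh s*Real.sinh s + 2*β*s^2*(Real.sinh s^2 + Real.cosh s^2)
      - (2*β*s*(Real.sinh s*Real.cosh s - s)
        + (1+β*s^2)*(Real.cosh s^2 + Real.sinh s^2 - 1))) s := by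
  have h1 := (hasDerivAt_pow 2 s).const_mul (2*β)
  have h2 := (h1.mul (Real.hasDerivAt_cosh s)).mul (Real.hasDerivAt_sinh s)
  have hb := ((hasDerivAt_pow 2 s).const_mul β).const_add 1
  have hc := ((Real.hasDerivAt_sinh s).mul (Real.hasDerivAt_cosh s)).sub (hasDerivAt_id' s)
  have h := h2.sub (hb.mul hc)
  unfold Nph
  refine h.congr_deriv ?_
  simp only [Pi.mul_apply, Pi.pow_apply, Pi.sub_apply, Pi.add_apply]
  push_cast
  ring

lemma hasDerivAt_phiA (β : ℝ) {s : ℝ} (hs : 0 < s) :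
    HasDerivAt (phiA β) ((1+β*s^2)*Gd s/(2*s^2*Real.sinh s^3)) s := by
  have hS : 0 < Real.sinh s := Real.sinh_pos_iff.2 hs
  have hdden : HasDerivAt (fun x : ℝ => 2*x*Real.sinh x^2)
      (2*Real.sinh s^2 + 4*s*Real.sinh s*Real.cosh s) s := by
    have h := (((hasDerivAt_id' s).const_mul 2).mul ((Real.hasDerivAt_sinh s).pow 2))
    refine h.congr_deriv ?_
    simp only [Pi.mul_apply, Pi.pow_apply, Pi.sub_apply, Pi.add_apply]
    push_cast
    ring
  have hne : 2*s*Real.sinh s^2 ≠ 0 := by positivity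
  have h := (hasDerivAt_Nph β s).div hdden hne
  unfold phiA
  refine h.congr_deriv ?_
  symm
  rw [div_eq_div_iff (by positivity) (by positivity)]
  unfold Gd Nph
  linear_combination (4*β*s^5*Real.sinh s^5 - 4*s^3*Real.sinh s^5) * Real.cosh_sq s

lemma hasDerivAt_c2e (β : ℝ) {s : ℝ} (hs : 0 < s) :
    HasDerivAt (c2e β) (Nph β s/(s^2*Real.cosh s^2)) s := by
  have hC : 0 < Real.cosh s := Real.cosh_pos s
  have hb := ((hasDerivAt_pow 2 s).const_mul β).const_add 1
  have hN := hb.mul (Real.hasDerivAt_sinh s)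
  have hD := (hasDerivAt_id' s).mul (Real.hasDerivAt_cosh s)
  have hne : s*Real.cosh s ≠ 0 := by positivity
  have h := hN.div hD hne
  unfold c2e
  refine h.congr_deriv ?_
  symm
  simp only [Pi.mul_apply, Pi.pow_apply, Pi.sub_apply, Pi.add_apply]
  rw [div_eq_div_iff (by positivity) (by positivity)]
  unfold Nph
  push_cast
  linear_combination (-(s^3*Real.cosh s^2*(1+β*s^2))) * Real.cosh_sq s

lemma fcoth_pos {s : ℝ} (hs : 0 ≤ s) : 0 < fcoth s := by
  unfold fcoth
  rcases eq_or_lt_of_le hs with h | h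
  · simp [← h]
  · rw [if_neg h.ne']
    have := Real.sinh_pos_iff.2 h
    have := Real.cosh_pos s
    positivity

lemma c2_eq_c2e (β : ℝ) {s : ℝ} (hs : 0 < s) :
    (1 + β * s ^ 2) / fcoth s = c2e β s := by
  unfold fcoth c2e
  rw [if_neg hs.ne']
  have hS := Real.sinh_pos_iff.2 hs
  have hC := Real.cosh_pos s
  field_simp

lemma continuousAt_fcoth_zero : ContinuousAt fcoth 0 := by
  have hslope : Filter.Tendsto (fun x : ℝ => Real.sinh x / x) (𝓝[≠] 0) (𝓝 1) := by
    have h := hasDerivAt_iff_tendsto_slope.1 (Real.hasDerivAt_sinh 0)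
    rw [Real.cosh_zero] at h
    refine h.congr (fun x => ?_)
    simp [slope, Real.sinh_zero, div_eq_inv_mul]
  have hinv : Filter.Tendsto (fun x : ℝ => x / Real.sinh x) (𝓝[≠] 0) (𝓝 1) := by
    have := hslope.inv₀ (by norm_num)
    simpa using this.congr (fun x => by rw [inv_div])
  have hmain : Filter.Tendsto fcoth (𝓝[≠] 0) (𝓝 1) := by
    have hc : Filter.Tendsto (fun x : ℝ => Real.cosh x) (𝓝[≠] 0) (𝓝 1) := by
      have h0 : Filter.Tendsto Real.cosh (𝓝[≠] (0:ℝ)) (𝓝 (Real.cosh 0)) :=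
        (Real.continuous_cosh.tendsto 0).mono_left nhdsWithin_le_nhds
      simpa using h0
    have := hc.mul hinv
    rw [mul_one] at this
    refine this.congr' ?_
    filter_upwards [self_mem_nhdsWithin] with x hx
    have hx' : x ≠ 0 := hx
    unfold fcoth
    rw [if_neg hx']
    ring
  have hpure : Filter.Tendsto fcoth (pure 0) (𝓝 1) := by
    have : fcoth 0 = 1 := by simp [fcoth]
    simpa [this] using tendsto_pure_nhds fcoth 0
  unfold ContinuousAt
  have : fcoth 0 = 1 := by simp [fcoth]
  rw [this, ← nhdsNE_sup_pure 0]
  exact Filter.tendsto_sup.2 ⟨hmain, hpure⟩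

set_option maxHeartbeats 1000000 in
/-- For `0 < β < 1/3` the squared wave speed
`c²(s) = (1 + βs²)/f(s)`, `s ≥ 0`, attains its global minimum at a unique `ω > 0`:
`c²(s) > c²(ω)` for all `s ≥ 0` with `s ≠ ω`. -/
theorem dispersion_min_unique (β : ℝ) (hβ0 : 0 < β) (hβ : β < 1 / 3) :
    ∃! ω : ℝ, 0 < ω ∧ ∀ s : ℝ, 0 ≤ s → s ≠ ω →
      (1 + β * ω ^ 2) / fcoth ω < (1 + β * s ^ 2) / fcoth s := by
  -- the candidate small point a
  have htend : Filter.Tendsto (fun x : ℝ => Real.cosh x ^ 2) (𝓝[>] 0) (𝓝 1) := by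
    have h0 : Filter.Tendsto (fun x : ℝ => Real.cosh x ^ 2) (𝓝[>] (0:ℝ)) (𝓝 (Real.cosh 0 ^ 2)) :=
      ((Real.continuous_cosh.pow 2).tendsto 0).mono_left nhdsWithin_le_nhds
    simpa using h0
  have hlt : (1 : ℝ) < 1/(3*β) := by
    rw [lt_div_iff₀ (by linarith)]
    linarith
  have hev : ∀ᶠ x in 𝓝[>] (0:ℝ), Real.cosh x ^ 2 < 1/(3*β) := htend.eventually_lt_const hlt
  have hev2 : ∀ᶠ x in 𝓝[>] (0:ℝ), x ∈ Set.Ioo (0:ℝ) 9 :=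
    Ioo_mem_nhdsGT_of_mem (by norm_num : (0:ℝ) ∈ Set.Ico (0:ℝ) 9)
  obtain ⟨a, ha1, ha2⟩ := (hev.and hev2).exists
  obtain ⟨ha0, ha9⟩ := ha2
  -- the candidate large point b
  obtain ⟨b, hb9, hβb⟩ : ∃ b : ℝ, 9 ≤ b ∧ 3 ≤ β * b := by
    refine ⟨max 9 (3/β), le_max_left _ _, ?_⟩
    have h1 : 3/β ≤ max 9 (3/β) := le_max_right _ _
    rw [div_le_iff₀ hβ0] at h1
    linarith
  have hb0 : (0:ℝ) < b := by linarith
  have hab : a < b := by linarith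
  -- φ a < 0
  have hNa : Nph β a < 0 := by
    unfold Nph
    have hC : 0 < Real.cosh a := Real.cosh_pos a
    have hS : 0 < Real.sinh a := Real.sinh_pos_iff.2 ha0
    have h1 : Real.sinh a ≤ a * Real.cosh a := sinh_le_mul_cosh ha0.le
    have h2 : a + 2*a^3/3 ≤ Real.sinh a * Real.cosh a := by
      have := sinh_ge_aux (by linarith : (0:ℝ) ≤ 2*a)
      have h2s : Real.sinh (2*a) = 2 * Real.sinh a * Real.cosh a := Real.sinh_two_mul a
      linarith [this, h2s.symm.le, h2s.le]
    have h3 : 3*β*Real.cosh a^2 < 1 := by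
      rw [lt_div_iff₀ (by linarith : (0:ℝ) < 3*β)] at ha1
      nlinarith [ha1]
    have h4 : 1 ≤ 1 + β*a^2 := by nlinarith [mul_nonneg hβ0.le (sq_nonneg a)]
    have h5 : a^2*(Real.cosh a*Real.sinh a) ≤ a^3*Real.cosh a^2 := by
      nlinarith [mul_le_mul_of_nonneg_left h1 (mul_nonneg (sq_nonneg a) hC.le)]
    have h6 : (1:ℝ) * (Real.sinh a*Real.cosh a - a) ≤ (1+β*a^2)*(Real.sinh a*Real.cosh a - a) := by
      have hX : 0 ≤ Real.sinh a*Real.cosh a - a := by nlinarith [h2, pow_pos ha0 3]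
      nlinarith [mul_nonneg (mul_nonneg hβ0.le (sq_nonneg a)) hX]
    have h7 : 2*β*(a^2*(Real.cosh a*Real.sinh a)) ≤ 2*β*(a^3*Real.cosh a^2) :=
      mul_le_mul_of_nonneg_left h5 (by linarith)
    have h8 : 0 < 2*a^3/3 * (1 - 3*β*Real.cosh a^2) := by
      have := pow_pos ha0 3
      have h9 : (0:ℝ) < 1 - 3*β*Real.cosh a^2 := by linarith
      positivity
    linarith [h7, h8, h6, h2]
  -- φ b > 0
  have hNb : 0 < Nph β b := by
    unfold Nph
    have hC : 0 < Real.cosh b := Real.cosh_pos b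
    have hS : b ≤ Real.sinh b := Real.self_le_sinh_iff.2 hb0.le
    have hS0 : 0 < Real.sinh b := by linarith
    have hC1 : Real.cosh b ≤ Real.sinh b + 1 := by
      have h := Real.cosh_sub_sinh b
      have : Real.exp (-b) ≤ 1 := by
        rw [Real.exp_le_one_iff]
        linarith
      linarith
    have hCS : Real.sinh b < Real.cosh b := Real.sinh_lt_cosh b
    have hP27 : 27 ≤ β * b^2 := by
      have := mul_le_mul_of_nonneg_right hβb (by linarith : (0:ℝ) ≤ b)
      nlinarith [this]
    have hA : Real.sinh b * Real.cosh b - b ≤ (10/9) * Real.sinh b^2 := by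
      have w1 := mul_le_mul_of_nonneg_right hC1 hS0.le
      have w2 := mul_nonneg (by linarith : (0:ℝ) ≤ b - 9) hS0.le
      have w3 := mul_le_mul_of_nonneg_right hS hS0.le
      linarith [w1, w2, w3]
    have hB : Real.sinh b^2 ≤ Real.cosh b * Real.sinh b := by
      nlinarith [mul_le_mul_of_nonneg_right hCS.le hS0.le]
    
    have k1 : (1+β*b^2) * (Real.sinh b * Real.cosh b - b)
        ≤ (1+β*b^2) * ((10/9) * Real.sinh b^2) :=
      mul_le_mul_of_nonneg_left hA (by positivity)
    have k2 : (10/9) * (1+β*b^2) < 2*(β*b^2) := by linarith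
    have k3 : (0:ℝ) < Real.sinh b^2 := by positivity
    have k4 := mul_lt_mul_of_pos_right k2 k3
    have k5 : 2*(β*b^2)*(Real.sinh b^2) ≤ 2*(β*b^2)*(Real.cosh b * Real.sinh b) :=
      mul_le_mul_of_nonneg_left hB (by positivity)
    linarith [k1, k4, k5]
  -- strict monotonicity of φ on (0,∞)
  have hφmono : StrictMonoOn (phiA β) (Set.Ioi 0) := by
    refine strictMonoOn_of_deriv_pos (convex_Ioi 0) ?_ ?_
    · exact fun y hy => ((hasDerivAt_phiA β hy).continuousAt).continuousWithinAt
    · intro y hy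
      rw [interior_Ioi, Set.mem_Ioi] at hy
      rw [(hasDerivAt_phiA β hy).deriv]
      have hG := Gd_pos hy
      have hS := Real.sinh_pos_iff.2 hy
      have : (0:ℝ) < 1 + β*y^2 := by positivity
      positivity
  -- sign of φ at a and b
  have hSa : 0 < Real.sinh a := Real.sinh_pos_iff.2 ha0
  have hSb : 0 < Real.sinh b := Real.sinh_pos_iff.2 hb0
  have hφa : phiA β a < 0 := div_neg_of_neg_of_pos hNa (by positivity)
  have hφb : 0 < phiA β b := div_pos hNb (by positivity)
  -- IVT
  have hφcont : ContinuousOn (phiA β) (Set.Icc a b) := by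
    intro y hy
    have hy0 : 0 < y := lt_of_lt_of_le ha0 hy.1
    exact ((hasDerivAt_phiA β hy0).continuousAt).continuousWithinAt
  have hmem : (0:ℝ) ∈ Set.Icc (phiA β a) (phiA β b) := ⟨hφa.le, hφb.le⟩
  obtain ⟨ω, hωmem, hωeq⟩ := intermediate_value_Icc hab.le hφcont hmem
  have hω0 : 0 < ω := lt_of_lt_of_le ha0 hωmem.1
  -- sign of φ on both sides of ω
  have hφneg : ∀ x : ℝ, 0 < x → x < ω → phiA β x < 0 := by
    intro x hx hxω
    have := hφmono (Set.mem_Ioi.2 hx) (Set.mem_Ioi.2 hω0) hxω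
    rwa [hωeq] at this
  have hφpos : ∀ x : ℝ, ω < x → 0 < phiA β x := by
    intro x hxω
    have := hφmono (Set.mem_Ioi.2 hω0) (Set.mem_Ioi.2 (hω0.trans hxω)) hxω
    rwa [hωeq] at this
  -- the squared speed
  set c2 : ℝ → ℝ := fun s => (1 + β * s ^ 2) / fcoth s with hc2def
  have hc2e : ∀ x : ℝ, 0 < x → c2 x = c2e β x := fun x hx => c2_eq_c2e β hx
  have hc2deriv : ∀ x : ℝ, 0 < x → HasDerivAt c2 (Nph β x/(x^2*Real.cosh x^2)) x := by
    intro x hx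
    refine (hasDerivAt_c2e β hx).congr_of_eventuallyEq ?_
    filter_upwards [Ioi_mem_nhds hx] with y hy
    exact hc2e y hy
  -- Nph sign from φ sign
  have hNph_sign : ∀ x : ℝ, 0 < x → (phiA β x < 0 → Nph β x < 0) ∧ (0 < phiA β x → 0 < Nph β x) := by
    intro x hx
    have hS := Real.sinh_pos_iff.2 hx
    have hden : (0:ℝ) < 2*x*Real.sinh x^2 := by positivity
    constructor
    · intro h
      by_contra hcon
      push_neg at hcon
      have : 0 ≤ phiA β x := div_nonneg hcon hden.le
      linarith
    · intro h
      by_contra hcon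
      push_neg at hcon
      have : phiA β x ≤ 0 := div_nonpos_of_nonpos_of_nonneg hcon hden.le
      linarith
  -- strict anti on [0, ω]
  have hanti : StrictAntiOn c2 (Set.Icc 0 ω) := by
    refine strictAntiOn_of_deriv_neg (convex_Icc 0 ω) ?_ ?_
    · intro y hy
      rcases eq_or_lt_of_le hy.1 with h | h
      · -- continuity at 0
        have : ContinuousAt c2 0 := by
          have h1 : ContinuousAt (fun s : ℝ => 1 + β * s ^ 2) 0 := by fun_prop
          have h2 : fcoth 0 ≠ 0 := by simp [fcoth]
          exact h1.div continuousAt_fcoth_zero h2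
        rw [← h]
        exact this.continuousWithinAt
      · exact ((hc2deriv y h).continuousAt).continuousWithinAt
    · intro y hy
      rw [interior_Icc, Set.mem_Ioo] at hy
      rw [(hc2deriv y hy.1).deriv]
      have hN := (hNph_sign y hy.1).1 (hφneg y hy.1 hy.2)
      have hC := Real.cosh_pos y
      apply div_neg_of_neg_of_pos hN
      exact mul_pos (pow_pos hy.1 2) (pow_pos hC 2)
  -- strict mono on [ω, ∞)
  have hmono : StrictMonoOn c2 (Set.Ici ω) := by
    refine strictMonoOn_of_deriv_pos (convex_Ici ω) ?_ ?_
    · intro y hy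
      have hy0 : 0 < y := lt_of_lt_of_le hω0 hy
      exact ((hc2deriv y hy0).continuousAt).continuousWithinAt
    · intro y hy
      rw [interior_Ici, Set.mem_Ioi] at hy
      have hy0 : 0 < y := hω0.trans hy
      rw [(hc2deriv y hy0).deriv]
      have hN := (hNph_sign y hy0).2 (hφpos y hy)
      have hC := Real.cosh_pos y
      apply div_pos hN
      exact mul_pos (pow_pos hy0 2) (pow_pos hC 2)
  -- the minimizing property
  have hmin : ∀ s : ℝ, 0 ≤ s → s ≠ ω → c2 ω < c2 s := by
    intro s hs hne
    rcases lt_or_gt_of_ne hne with h | h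
    · exact hanti (Set.mem_Icc.2 ⟨hs, h.le⟩) (Set.mem_Icc.2 ⟨hω0.le, le_refl ω⟩) h
    · exact hmono (Set.mem_Ici.2 (le_refl ω)) (Set.mem_Ici.2 h.le) h
  refine ⟨ω, ⟨hω0, hmin⟩, ?_⟩
  rintro ω' ⟨hω'0, hmin'⟩
  by_contra hne
  have h1 := hmin ω' hω'0.le hne
  have h2 := hmin' ω hω0.le (fun h => hne h.symm)
  simp only [hc2def] at h1
  linarith
end

section
/- Let ω > 0, 0 < ε ≤ 1, θ ∈ (0,1), and let η, v ∈ L²(ℝ²) have Fourier transforms supported in B_δ(ω,0) with 0 < δ < ω, satisfying ‖ |k−(ω,0)| η̂ ‖_{L²} ≤ ε|||η||| and ‖η̂‖_{L¹} ≤ ε^θ |||η||| (and similarly for v). Then for any Fourier multiplier operator m(D) whose symbol m is Lipschitz near (2ω,0), one has ‖m(D)(ηv) − m(2ω,0) ηv‖_{L²} ≲ ε^{1+θ} |||η||| · |||v|||, with implicit constant depending only on ω, δ and the Lipschitz constant of m. -/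
open MeasureTheory
open scoped ENNReal

lemma mp_sub_left (k : ℝ × ℝ) : MeasurePreserving (fun t : ℝ × ℝ => k - t) volume volume := by
  simp_rw [sub_eq_add_neg]
  exact (measurePreserving_add_left volume k).comp (Measure.measurePreserving_neg volume)

lemma young_two_one {u w : ℝ × ℝ → ℝ≥0∞} (hu : Measurable u) (hw : Measurable w) :
    ∫⁻ k : ℝ × ℝ, (∫⁻ s : ℝ × ℝ, u (k - s) * w s) ^ 2 ≤
      (∫⁻ t : ℝ × ℝ, u t ^ 2) * (∫⁻ s : ℝ × ℝ, w s) ^ 2 := by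
  have hUW : Measurable fun p : (ℝ × ℝ) × (ℝ × ℝ) => u (p.1 - p.2) ^ 2 * w p.2 :=
    ((hu.comp (measurable_fst.sub measurable_snd)).pow_const 2).mul (hw.comp measurable_snd)
  have hCS : ∀ k : ℝ × ℝ, (∫⁻ s, u (k - s) * w s) ^ 2 ≤
      (∫⁻ s, u (k - s) ^ 2 * w s) * (∫⁻ s, w s) := by
    intro k
    have hpq : (2 : ℝ).HolderConjugate 2 := Real.HolderConjugate.two_two
    have huk : Measurable fun s : ℝ × ℝ => u (k - s) := hu.comp (measurable_const.sub measurable_id)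
    have hf : AEMeasurable (fun s : ℝ × ℝ => u (k - s) * (w s) ^ (1/2 : ℝ)) volume :=
      (huk.mul (hw.pow_const _)).aemeasurable
    have hg : AEMeasurable (fun s : ℝ × ℝ => (w s) ^ (1/2 : ℝ)) volume :=
      (hw.pow_const _).aemeasurable
    have hsplit : ∀ x : ℝ≥0∞, x ^ (1/2 : ℝ) * x ^ (1/2 : ℝ) = x := by
      intro x
      rw [← ENNReal.rpow_add_of_nonneg (1/2) (1/2) (by norm_num) (by norm_num)]
      norm_num
    have hH := ENNReal.lintegral_mul_le_Lp_mul_Lq volume hpq hf hg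
    have h1 : (∫⁻ s, u (k - s) * w s) =
        ∫⁻ s, ((fun s => u (k - s) * (w s) ^ (1/2 : ℝ)) * fun s => (w s) ^ (1/2 : ℝ)) s := by
      refine lintegral_congr fun s => ?_
      simp only [Pi.mul_apply]
      rw [mul_assoc, hsplit]
    have h2 : (∫⁻ s, (u (k - s) * (w s) ^ (1/2 : ℝ)) ^ (2 : ℝ)) =
        ∫⁻ s, u (k - s) ^ 2 * w s := by
      refine lintegral_congr fun s => ?_
      rw [ENNReal.mul_rpow_of_nonneg _ _ (by norm_num), ← ENNReal.rpow_natCast (u (k - s)) 2,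
        ← ENNReal.rpow_mul]
      norm_num
    have h3 : (∫⁻ s, ((w s) ^ (1/2 : ℝ)) ^ (2 : ℝ)) = ∫⁻ s, w s := by
      refine lintegral_congr fun s => ?_
      rw [← ENNReal.rpow_mul]
      norm_num
    rw [h1]
    calc (∫⁻ s, ((fun s => u (k - s) * (w s) ^ (1/2 : ℝ)) * fun s => (w s) ^ (1/2 : ℝ)) s) ^ 2
        ≤ ((∫⁻ s, (u (k - s) * (w s) ^ (1/2 : ℝ)) ^ (2:ℝ)) ^ (1/2 : ℝ) *
            (∫⁻ s, ((w s) ^ (1/2 : ℝ)) ^ (2:ℝ)) ^ (1/2 : ℝ)) ^ 2 :=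
          pow_le_pow_left₀ (zero_le) hH 2
      _ = (∫⁻ s, u (k - s) ^ 2 * w s) * (∫⁻ s, w s) := by
          rw [h2, h3, mul_pow, ← ENNReal.rpow_natCast (_ ^ (1/2:ℝ)) 2,
            ← ENNReal.rpow_natCast ((∫⁻ s, w s) ^ (1/2:ℝ)) 2, ← ENNReal.rpow_mul,
            ← ENNReal.rpow_mul]
          norm_num
  calc ∫⁻ k : ℝ × ℝ, (∫⁻ s, u (k - s) * w s) ^ 2
      ≤ ∫⁻ k : ℝ × ℝ, (∫⁻ s, u (k - s) ^ 2 * w s) * (∫⁻ s, w s) := lintegral_mono hCS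
    _ = (∫⁻ k : ℝ × ℝ, ∫⁻ s, u (k - s) ^ 2 * w s) * (∫⁻ s, w s) :=
        lintegral_mul_const _ hUW.lintegral_prod_right'
    _ = (∫⁻ s : ℝ × ℝ, ∫⁻ k, u (k - s) ^ 2 * w s) * (∫⁻ s, w s) := by
        rw [lintegral_lintegral_swap hUW.aemeasurable]
    _ = (∫⁻ s : ℝ × ℝ, (∫⁻ t, u t ^ 2) * w s) * (∫⁻ s, w s) := by
        congr 1
        refine lintegral_congr fun s => ?_
        have hms : Measurable fun k : ℝ × ℝ => u (k - s) ^ 2 :=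
          (hu.comp (measurable_id.sub measurable_const)).pow_const 2
        rw [lintegral_mul_const _ hms,
          (measurePreserving_sub_right volume s).lintegral_comp (hu.pow_const 2), mul_comm]
    _ = (∫⁻ t : ℝ × ℝ, u t ^ 2) * (∫⁻ s, w s) ^ 2 := by
        rw [lintegral_const_mul _ hw, sq, mul_assoc]

lemma young_one_two {u w : ℝ × ℝ → ℝ≥0∞} (hu : Measurable u) (hw : Measurable w) :
    ∫⁻ k : ℝ × ℝ, (∫⁻ s : ℝ × ℝ, u (k - s) * w s) ^ 2 ≤
      (∫⁻ s : ℝ × ℝ, w s ^ 2) * (∫⁻ t : ℝ × ℝ, u t) ^ 2 := by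
  have hcomm : ∀ k : ℝ × ℝ, (∫⁻ s, u (k - s) * w s) = ∫⁻ s, w (k - s) * u s := by
    intro k
    have hmeas : Measurable fun s : ℝ × ℝ => u (k - s) * w s :=
      (hu.comp (measurable_const.sub measurable_id)).mul hw
    have := (mp_sub_left k).lintegral_comp hmeas
    calc (∫⁻ s, u (k - s) * w s) = ∫⁻ t, u (k - (k - t)) * w (k - t) := this.symm
      _ = ∫⁻ s, w (k - s) * u s := by
          refine lintegral_congr fun t => ?_
          rw [sub_sub_cancel, mul_comm]
  simp_rw [hcomm]
  exact young_two_one hw hu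

lemma weighted_sq_bound (ω δ : ℝ) (f : ℝ × ℝ → ℂ) (hfm : Measurable f)
    (hf2 : MemLp f 2 (volume : Measure (ℝ × ℝ)))
    (hsupp : ∀ k : ℝ × ℝ, δ ≤ dist k ((ω, 0) : ℝ × ℝ) → f k = 0) (M : ℝ)
    (hM : Real.sqrt (∫ k : ℝ × ℝ, dist k ((ω, 0) : ℝ × ℝ) ^ 2 * ‖f k‖ ^ 2) ≤ M) :
    ∫⁻ k : ℝ × ℝ, (ENNReal.ofReal (dist k ((ω, 0) : ℝ × ℝ)) * (‖f k‖₊ : ℝ≥0∞)) ^ 2 ≤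
      ENNReal.ofReal (M ^ 2) := by
  set q : ℝ × ℝ → ℝ := fun k => dist k ((ω, 0) : ℝ × ℝ) ^ 2 * ‖f k‖ ^ 2 with hq
  have hqm : Measurable q :=
    ((measurable_id.dist measurable_const).pow_const 2).mul (hfm.norm.pow_const 2)
  have hnsq : Integrable (fun k : ℝ × ℝ => ‖f k‖ ^ 2) volume := by
    have := hf2.integrable_norm_rpow two_ne_zero ENNReal.ofNat_ne_top
    simpa [ENNReal.toReal_ofNat, Real.rpow_natCast] using this
  have hqint : Integrable q volume := by
    refine (hnsq.const_mul (δ ^ 2)).mono' hqm.aestronglyMeasurable (ae_of_all _ fun k => ?_)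
    rw [Real.norm_eq_abs, abs_of_nonneg (by positivity)]
    by_cases h : δ ≤ dist k ((ω, 0) : ℝ × ℝ)
    · simp [hq, hsupp k h]
    · push_neg at h
      have h0 : (0:ℝ) ≤ dist k ((ω, 0) : ℝ × ℝ) := dist_nonneg
      have : dist k ((ω, 0) : ℝ × ℝ) ^ 2 ≤ δ ^ 2 := by nlinarith
      simp only [hq]
      nlinarith [sq_nonneg (‖f k‖), sq_nonneg (dist k ((ω, 0) : ℝ × ℝ))]
  have hpt : ∀ k : ℝ × ℝ,
      (ENNReal.ofReal (dist k ((ω, 0) : ℝ × ℝ)) * (‖f k‖₊ : ℝ≥0∞)) ^ 2 =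
        ENNReal.ofReal (q k) := by
    intro k
    rw [← ENNReal.ofReal_coe_nnreal, coe_nnnorm, ← ENNReal.ofReal_mul dist_nonneg,
      ← ENNReal.ofReal_pow (by positivity)]
    congr 1
    simp [hq, mul_pow]
  calc ∫⁻ k : ℝ × ℝ, (ENNReal.ofReal (dist k ((ω, 0) : ℝ × ℝ)) * (‖f k‖₊ : ℝ≥0∞)) ^ 2
      = ∫⁻ k, ENNReal.ofReal (q k) := lintegral_congr hpt
    _ = ENNReal.ofReal (∫ k, q k) :=
        (ofReal_integral_eq_lintegral_ofReal hqint (ae_of_all _ fun k => by positivity)).symm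
    _ ≤ ENNReal.ofReal (M ^ 2) := by
        refine ENNReal.ofReal_le_ofReal ?_
        have h0 : (0:ℝ) ≤ ∫ k, q k := integral_nonneg fun k => by positivity
        calc ∫ k, q k = Real.sqrt (∫ k, q k) ^ 2 := (Real.sq_sqrt h0).symm
          _ ≤ M ^ 2 := by
              have := Real.sqrt_nonneg (∫ k, q k)
              nlinarith

/-- Fourier multiplier operators acting on products of functions whose
Fourier transforms are concentrated near `(ω,0)` may be approximated by the constant
`m(2ω,0)`, with error `O(ε^{1+θ})`.  Everything is phrased on the Fourier side: the
Fourier transform of the product `ηv` is the convolution `η̂ * v̂`, and by Plancherel the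
`L²` norm of `m(D)(ηv) − m(2ω,0)ηv` equals the `L²` norm of `(m − m(2ω,0))(η̂ * v̂)`. -/
theorem multiplier_product_estimate (ω δ : ℝ) (hω : 0 < ω) (hδ0 : 0 < δ) (hδ : δ < ω)
    (m : ℝ × ℝ → ℂ) (L : ℝ)
    (hm : ∀ k ∈ Metric.ball ((2 * ω, 0) : ℝ × ℝ) (2 * δ),
      ‖m k - m ((2 * ω, 0) : ℝ × ℝ)‖ ≤ L * dist k ((2 * ω, 0) : ℝ × ℝ)) :
    ∃ C > 0, ∀ ε θ : ℝ, 0 < ε → ε ≤ 1 → 0 < θ → θ < 1 →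
      ∀ ηhat vhat : ℝ × ℝ → ℂ, Measurable ηhat → Measurable vhat →
        Integrable ηhat → Integrable vhat →
        MemLp ηhat 2 (volume : Measure (ℝ × ℝ)) →
        MemLp vhat 2 (volume : Measure (ℝ × ℝ)) →
        (∀ k : ℝ × ℝ, δ ≤ dist k ((ω, 0) : ℝ × ℝ) → ηhat k = 0) →
        (∀ k : ℝ × ℝ, δ ≤ dist k ((ω, 0) : ℝ × ℝ) → vhat k = 0) →
        ∀ Nη Nv : ℝ,
          Real.sqrt (∫ k : ℝ × ℝ, dist k ((ω, 0) : ℝ × ℝ) ^ 2 * ‖ηhat k‖ ^ 2) ≤ ε * Nη →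
          (∫ k : ℝ × ℝ, ‖ηhat k‖) ≤ ε ^ θ * Nη →
          Real.sqrt (∫ k : ℝ × ℝ, dist k ((ω, 0) : ℝ × ℝ) ^ 2 * ‖vhat k‖ ^ 2) ≤ ε * Nv →
          (∫ k : ℝ × ℝ, ‖vhat k‖) ≤ ε ^ θ * Nv →
          Real.sqrt (∫ k : ℝ × ℝ,
              ‖(m k - m ((2 * ω, 0) : ℝ × ℝ)) * (∫ s : ℝ × ℝ, ηhat (k - s) * vhat s)‖ ^ 2) ≤
            C * ε ^ (1 + θ) * Nη * Nv := by
  -- the constant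
  refine ⟨Real.sqrt (8 * L ^ 2) + 1, by positivity, ?_⟩
  intro ε θ hε hε1 hθ hθ1 ηhat vhat hηm hvm hηI hvI hη2 hv2 hηsupp hvsupp Nη Nv hη1 hη0 hv1 hv0
  -- L is nonnegative
  have hL : 0 ≤ L := by
    have hd : dist ((2 * ω + δ, 0) : ℝ × ℝ) ((2 * ω, 0) : ℝ × ℝ) = δ := by
      rw [Prod.dist_eq]
      have h1 : dist (2 * ω + δ) (2 * ω) = δ := by
        rw [Real.dist_eq, show 2 * ω + δ - 2 * ω = δ by ring]
        exact abs_of_pos hδ0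
      have h2 : dist (0 : ℝ) 0 = 0 := dist_self 0
      rw [h1, h2]
      exact max_eq_left hδ0.le
    have hmem : ((2 * ω + δ, 0) : ℝ × ℝ) ∈ Metric.ball ((2 * ω, 0) : ℝ × ℝ) (2 * δ) := by
      rw [Metric.mem_ball, hd]
      linarith
    have h1 := hm _ hmem
    rw [hd] at h1
    nlinarith [norm_nonneg (m ((2 * ω + δ, 0) : ℝ × ℝ) - m ((2 * ω, 0) : ℝ × ℝ))]
  have hNη : 0 ≤ Nη := by
    by_contra h; push_neg at h
    have h1 : (0:ℝ) ≤ ∫ k : ℝ × ℝ, ‖ηhat k‖ := integral_nonneg fun k => norm_nonneg _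
    have h2 := Real.rpow_pos_of_pos hε θ
    nlinarith
  have hNv : 0 ≤ Nv := by
    by_contra h; push_neg at h
    have h1 : (0:ℝ) ≤ ∫ k : ℝ × ℝ, ‖vhat k‖ := integral_nonneg fun k => norm_nonneg _
    have h2 := Real.rpow_pos_of_pos hε θ
    nlinarith
  have hRnn : 0 ≤ ε ^ (1 + θ) * Nη * Nv :=
    mul_nonneg (mul_nonneg (Real.rpow_nonneg hε.le _) hNη) hNv
  set c : ℂ := m ((2 * ω, 0) : ℝ × ℝ) with hc
  set F : ℝ × ℝ → ℂ := fun k => (m k - c) * ∫ s : ℝ × ℝ, ηhat (k - s) * vhat s with hF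
  -- triangle inequality
  have htri : ∀ k s : ℝ × ℝ, dist k ((2 * ω, 0) : ℝ × ℝ) ≤
      dist (k - s) ((ω, 0) : ℝ × ℝ) + dist s ((ω, 0) : ℝ × ℝ) := by
    intro k s
    have h2 : ((2 * ω, 0) : ℝ × ℝ) = ((ω, 0) : ℝ × ℝ) + ((ω, 0) : ℝ × ℝ) := by
      rw [Prod.mk_add_mk]
      norm_num [two_mul]
    rw [dist_eq_norm, dist_eq_norm, dist_eq_norm, h2]
    have h3 : k - (((ω, 0) : ℝ × ℝ) + ((ω, 0) : ℝ × ℝ)) =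
        (k - s - ((ω, 0) : ℝ × ℝ)) + (s - ((ω, 0) : ℝ × ℝ)) := by abel
    rw [h3]
    exact norm_add_le _ _
  -- the ENNReal-valued densities
  set dd : ℝ × ℝ → ℝ≥0∞ := fun t => ENNReal.ofReal (dist t ((ω, 0) : ℝ × ℝ)) with hdd
  set u : ℝ × ℝ → ℝ≥0∞ := fun t => (‖ηhat t‖₊ : ℝ≥0∞) with hu
  set w : ℝ × ℝ → ℝ≥0∞ := fun t => (‖vhat t‖₊ : ℝ≥0∞) with hw
  set g : ℝ × ℝ → ℝ≥0∞ := fun t => dd t * u t with hg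
  set h : ℝ × ℝ → ℝ≥0∞ := fun t => dd t * w t with hh
  have hddm : Measurable dd := (measurable_id.dist measurable_const).ennreal_ofReal
  have hum : Measurable u := hηm.nnnorm.coe_nnreal_ennreal
  have hwm : Measurable w := hvm.nnnorm.coe_nnreal_ennreal
  have hgm : Measurable g := hddm.mul hum
  have hhm : Measurable h := hddm.mul hwm
  set A : ℝ × ℝ → ℝ≥0∞ := fun k => ∫⁻ s, g (k - s) * w s with hA
  set B : ℝ × ℝ → ℝ≥0∞ := fun k => ∫⁻ s, u (k - s) * h s with hB
  -- vanishing of the convolution away from (2ω,0)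
  have hconv0 : ∀ k : ℝ × ℝ, ¬ dist k ((2 * ω, 0) : ℝ × ℝ) < 2 * δ →
      (∫ s : ℝ × ℝ, ηhat (k - s) * vhat s) = 0 := by
    intro k hk
    have hz : ∀ s : ℝ × ℝ, ηhat (k - s) * vhat s = 0 := by
      intro s
      by_cases h1 : δ ≤ dist (k - s) ((ω, 0) : ℝ × ℝ)
      · rw [hηsupp _ h1, zero_mul]
      · by_cases h2 : δ ≤ dist s ((ω, 0) : ℝ × ℝ)
        · rw [hvsupp _ h2, mul_zero]
        · push_neg at h1 h2
          exact absurd (lt_of_le_of_lt (htri k s) (by linarith)) hk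
    simp only [hz, integral_zero]
  -- pointwise bound on the Fourier side
  have hpt : ∀ k : ℝ × ℝ, (‖F k‖₊ : ℝ≥0∞) ≤ ENNReal.ofReal L * (A k + B k) := by
    intro k
    by_cases hk : dist k ((2 * ω, 0) : ℝ × ℝ) < 2 * δ
    · have hmeas1 : Measurable fun s : ℝ × ℝ => u (k - s) * w s :=
        (hum.comp (measurable_const.sub measurable_id)).mul hwm
      have hmeas2 : Measurable fun s : ℝ × ℝ => g (k - s) * w s + u (k - s) * h s :=
        ((hgm.comp (measurable_const.sub measurable_id)).mul hwm).add
          ((hum.comp (measurable_const.sub measurable_id)).mul hhm)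
      calc (‖F k‖₊ : ℝ≥0∞) = (‖m k - c‖₊ : ℝ≥0∞) *
            (‖∫ s : ℝ × ℝ, ηhat (k - s) * vhat s‖₊ : ℝ≥0∞) := by
            rw [hF]; simp [nnnorm_mul, ENNReal.coe_mul]
        _ ≤ ENNReal.ofReal (L * dist k ((2 * ω, 0) : ℝ × ℝ)) *
              ∫⁻ s, (‖ηhat (k - s) * vhat s‖₊ : ℝ≥0∞) := by
            refine mul_le_mul' ?_ (enorm_integral_le_lintegral_enorm _)
            rw [← ENNReal.ofReal_coe_nnreal, coe_nnnorm]
            exact ENNReal.ofReal_le_ofReal (hm k (Metric.mem_ball.mpr hk))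
        _ = ∫⁻ s, ENNReal.ofReal (L * dist k ((2 * ω, 0) : ℝ × ℝ)) * (u (k - s) * w s) := by
            rw [lintegral_const_mul _ hmeas1]
            congr 1
            refine lintegral_congr fun s => ?_
            rw [nnnorm_mul, ENNReal.coe_mul]
        _ ≤ ∫⁻ s, ENNReal.ofReal L * (g (k - s) * w s + u (k - s) * h s) := by
            refine lintegral_mono fun s => ?_
            rw [ENNReal.ofReal_mul hL, mul_assoc]
            refine mul_le_mul_right ?_ _
            have hle : ENNReal.ofReal (dist k ((2 * ω, 0) : ℝ × ℝ)) ≤ dd (k - s) + dd s := by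
              rw [hdd]
              calc ENNReal.ofReal (dist k ((2 * ω, 0) : ℝ × ℝ)) ≤
                  ENNReal.ofReal (dist (k - s) ((ω, 0) : ℝ × ℝ) + dist s ((ω, 0) : ℝ × ℝ)) :=
                    ENNReal.ofReal_le_ofReal (htri k s)
                _ = _ := ENNReal.ofReal_add dist_nonneg dist_nonneg
            calc ENNReal.ofReal (dist k ((2 * ω, 0) : ℝ × ℝ)) * (u (k - s) * w s)
                ≤ (dd (k - s) + dd s) * (u (k - s) * w s) := mul_le_mul_left hle _
              _ = g (k - s) * w s + u (k - s) * h s := by rw [hg, hh]; ring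
        _ = ENNReal.ofReal L * (A k + B k) := by
            have hm1 : Measurable fun s : ℝ × ℝ => g (k - s) * w s :=
              (hgm.comp (measurable_const.sub measurable_id)).mul hwm
            rw [lintegral_const_mul _ hmeas2, hA, hB, lintegral_add_left hm1]
    · rw [hF]
      simp [hconv0 k hk]
  -- square the pointwise bound
  have hsq : ∀ k : ℝ × ℝ, (‖F k‖₊ : ℝ≥0∞) ^ 2 ≤
      (ENNReal.ofReal L ^ 2 * 4) * (A k ^ 2 + B k ^ 2) := by
    intro k
    have h1 : A k + B k ≤ 2 * max (A k) (B k) := by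
      rw [two_mul]
      exact add_le_add (le_max_left _ _) (le_max_right _ _)
    have h2 : max (A k) (B k) ^ 2 ≤ A k ^ 2 + B k ^ 2 := by
      rcases le_total (A k) (B k) with hab | hab
      · rw [max_eq_right hab]; exact le_add_self
      · rw [max_eq_left hab]; exact le_self_add
    calc (‖F k‖₊ : ℝ≥0∞) ^ 2 ≤ (ENNReal.ofReal L * (A k + B k)) ^ 2 :=
        pow_le_pow_left₀ (zero_le) (hpt k) 2
      _ = ENNReal.ofReal L ^ 2 * (A k + B k) ^ 2 := by rw [mul_pow]
      _ ≤ ENNReal.ofReal L ^ 2 * (2 * max (A k) (B k)) ^ 2 :=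
          mul_le_mul_right (pow_le_pow_left₀ (zero_le) h1 2) _
      _ = ENNReal.ofReal L ^ 2 * (4 * max (A k) (B k) ^ 2) := by ring
      _ ≤ ENNReal.ofReal L ^ 2 * (4 * (A k ^ 2 + B k ^ 2)) :=
          mul_le_mul_right (mul_le_mul_right h2 _) _
      _ = (ENNReal.ofReal L ^ 2 * 4) * (A k ^ 2 + B k ^ 2) := by ring
  -- measurability of A and B
  have hAm : Measurable A :=
    Measurable.lintegral_prod_right'
      (f := fun p : (ℝ × ℝ) × (ℝ × ℝ) => g (p.1 - p.2) * w p.2)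
      ((hgm.comp (measurable_fst.sub measurable_snd)).mul (hwm.comp measurable_snd))
  have hBm : Measurable B :=
    Measurable.lintegral_prod_right'
      (f := fun p : (ℝ × ℝ) × (ℝ × ℝ) => u (p.1 - p.2) * h p.2)
      ((hum.comp (measurable_fst.sub measurable_snd)).mul (hhm.comp measurable_snd))
  -- the four L¹/L² bounds
  have hwL1 : ∫⁻ s, w s ≤ ENNReal.ofReal (ε ^ θ * Nv) := by
    rw [hw]; refine le_trans (le_of_eq (ofReal_integral_norm_eq_lintegral_enorm hvI).symm) ?_
    exact ENNReal.ofReal_le_ofReal hv0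
  have huL1 : ∫⁻ s, u s ≤ ENNReal.ofReal (ε ^ θ * Nη) := by
    rw [hu]; refine le_trans (le_of_eq (ofReal_integral_norm_eq_lintegral_enorm hηI).symm) ?_
    exact ENNReal.ofReal_le_ofReal hη0
  have hgL2 : ∫⁻ t, g t ^ 2 ≤ ENNReal.ofReal ((ε * Nη) ^ 2) :=
    weighted_sq_bound ω δ ηhat hηm hη2 hηsupp (ε * Nη) hη1
  have hhL2 : ∫⁻ t, h t ^ 2 ≤ ENNReal.ofReal ((ε * Nv) ^ 2) :=
    weighted_sq_bound ω δ vhat hvm hv2 hvsupp (ε * Nv) hv1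
  -- assemble the lintegral bound
  have hmain : ∫⁻ k : ℝ × ℝ, (‖F k‖₊ : ℝ≥0∞) ^ 2 ≤
      ENNReal.ofReal (8 * L ^ 2 * (ε ^ (1 + θ) * Nη * Nv) ^ 2) := by
    calc ∫⁻ k, (‖F k‖₊ : ℝ≥0∞) ^ 2
        ≤ ∫⁻ k, (ENNReal.ofReal L ^ 2 * 4) * (A k ^ 2 + B k ^ 2) := lintegral_mono hsq
      _ = (ENNReal.ofReal L ^ 2 * 4) * ((∫⁻ k, A k ^ 2) + ∫⁻ k, B k ^ 2) := by
          rw [lintegral_const_mul (f := fun k => A k ^ 2 + B k ^ 2) _ ((hAm.pow_const 2).add (hBm.pow_const 2)),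
            lintegral_add_left (hAm.pow_const 2)]
      _ ≤ (ENNReal.ofReal L ^ 2 * 4) *
            ((∫⁻ t, g t ^ 2) * (∫⁻ s, w s) ^ 2 + (∫⁻ t, h t ^ 2) * (∫⁻ s, u s) ^ 2) := by
          refine mul_le_mul_right (add_le_add ?_ ?_) _
          · exact young_two_one hgm hwm
          · exact young_one_two hum hhm
      _ ≤ (ENNReal.ofReal L ^ 2 * 4) *
            (ENNReal.ofReal ((ε * Nη) ^ 2) * ENNReal.ofReal (ε ^ θ * Nv) ^ 2 +
              ENNReal.ofReal ((ε * Nv) ^ 2) * ENNReal.ofReal (ε ^ θ * Nη) ^ 2) := by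
          refine mul_le_mul_right (add_le_add ?_ ?_) _
          · exact mul_le_mul' hgL2 (pow_le_pow_left₀ (zero_le) hwL1 2)
          · exact mul_le_mul' hhL2 (pow_le_pow_left₀ (zero_le) huL1 2)
      _ = ENNReal.ofReal (8 * L ^ 2 * (ε ^ (1 + θ) * Nη * Nv) ^ 2) := by
          have hθv : (0:ℝ) ≤ ε ^ θ * Nv := mul_nonneg (Real.rpow_nonneg hε.le _) hNv
          have hθη : (0:ℝ) ≤ ε ^ θ * Nη := mul_nonneg (Real.rpow_nonneg hε.le _) hNη
          rw [← ENNReal.ofReal_pow hL, ← ENNReal.ofReal_pow hθv, ← ENNReal.ofReal_pow hθη,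
            ← ENNReal.ofReal_mul (by positivity), ← ENNReal.ofReal_mul (by positivity),
            ← ENNReal.ofReal_ofNat 4, ← ENNReal.ofReal_mul (by positivity),
            ← ENNReal.ofReal_add (by positivity) (by positivity),
            ← ENNReal.ofReal_mul (by positivity)]
          congr 1
          have hrw : ε ^ (1 + θ) = ε * ε ^ θ := by
            rw [Real.rpow_add hε, Real.rpow_one]
          rw [hrw]
          ring
  -- from the lintegral bound to the real claim
  by_cases hInt : Integrable (fun k : ℝ × ℝ => ‖F k‖ ^ 2) volume
  · have hXeq : (∫ k : ℝ × ℝ, ‖F k‖ ^ 2) = (∫⁻ k, (‖F k‖₊ : ℝ≥0∞) ^ 2).toReal := by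
      rw [integral_eq_lintegral_of_nonneg_ae (ae_of_all _ fun k => sq_nonneg _) hInt.1]
      congr 1
      refine lintegral_congr fun k => ?_
      rw [← ENNReal.ofReal_coe_nnreal, coe_nnnorm, ← ENNReal.ofReal_pow (norm_nonneg _)]
    have hXle : (∫ k : ℝ × ℝ, ‖F k‖ ^ 2) ≤ 8 * L ^ 2 * (ε ^ (1 + θ) * Nη * Nv) ^ 2 := by
      rw [hXeq]
      calc (∫⁻ k, (‖F k‖₊ : ℝ≥0∞) ^ 2).toReal ≤
          (ENNReal.ofReal (8 * L ^ 2 * (ε ^ (1 + θ) * Nη * Nv) ^ 2)).toReal :=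
            ENNReal.toReal_mono ENNReal.ofReal_ne_top hmain
        _ = 8 * L ^ 2 * (ε ^ (1 + θ) * Nη * Nv) ^ 2 :=
            ENNReal.toReal_ofReal (by positivity)
    calc Real.sqrt (∫ k : ℝ × ℝ, ‖F k‖ ^ 2)
        ≤ Real.sqrt (8 * L ^ 2 * (ε ^ (1 + θ) * Nη * Nv) ^ 2) := Real.sqrt_le_sqrt hXle
      _ = Real.sqrt (8 * L ^ 2) * (ε ^ (1 + θ) * Nη * Nv) := by
          rw [Real.sqrt_mul (by positivity), Real.sqrt_sq hRnn]
      _ ≤ (Real.sqrt (8 * L ^ 2) + 1) * (ε ^ (1 + θ) * Nη * Nv) := by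
          nlinarith [Real.sqrt_nonneg (8 * L ^ 2)]
      _ = (Real.sqrt (8 * L ^ 2) + 1) * ε ^ (1 + θ) * Nη * Nv := by ring
  · rw [integral_undef hInt, Real.sqrt_zero]
    have hC : (0:ℝ) ≤ Real.sqrt (8 * L ^ 2) + 1 := by positivity
    calc (0:ℝ) ≤ (Real.sqrt (8 * L ^ 2) + 1) * (ε ^ (1 + θ) * Nη * Nv) :=
        mul_nonneg hC hRnn
      _ = (Real.sqrt (8 * L ^ 2) + 1) * ε ^ (1 + θ) * Nη * Nv := by ring
end

section
/- Let H be a Hilbert space, s ∈ ℕ, and let {x_n} ⊂ ℓ²(ℤˢ, H) be a bounded sequence such that the set S = {x_{n,j} : n ∈ ℕ, j ∈ ℤˢ} is relatively compact in H and limsup_{n→∞} ‖x_n‖_{ℓ^∞(ℤˢ,H)} > 0. Then there is a subsequence, a sequence {w_n} ⊂ ℤˢ, and a nonzero x¹ ∈ ℓ²(ℤˢ,H) such that T_{−w_n}x_n ⇀ x¹ weakly in ℓ²(ℤˢ,H), ‖x¹‖_{ℓ^∞} = lim_n ‖x_n‖_{ℓ^∞} > 0, and lim_n ‖x_n‖²_{ℓ²}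 = ‖x¹‖²_{ℓ²} + lim_n ‖x_n − T_{w_n}x¹‖²_{ℓ²}. -/
open Filter
open scoped RealInnerProductSpace ENNReal

set_option linter.unusedSectionVars false

section AuxCCP

variable {H : Type*} [NormedAddCommGroup H] [InnerProductSpace ℝ H]
variable {ι : Type*}

lemma CCP.rpow_toReal_two (a : ℝ) : a ^ ((2:ℝ≥0∞).toReal) = a ^ 2 := by
  rw [show (2:ℝ≥0∞).toReal = ((2:ℕ):ℝ) by norm_num, Real.rpow_natCast]

lemma CCP.summable_sq (f : lp (fun _ : ι => H) 2) :
    Summable (fun j : ι => ‖f j‖ ^ (2:ℝ≥0∞).toReal) :=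
  (memℓp_gen_iff (by norm_num)).1 (lp.memℓp f)

lemma CCP.bddAbove_norms (f : lp (fun _ : ι => H) 2) :
    BddAbove (Set.range fun j : ι => ‖f j‖) := by
  refine ⟨‖f‖, ?_⟩
  rintro _ ⟨j, rfl⟩
  exact lp.norm_apply_le_norm (by norm_num) f j

lemma CCP.memℓp_shift [AddGroup ι] (f : lp (fun _ : ι => H) 2) (w : ι) :
    Memℓp (fun j : ι => f (j + w)) 2 := by
  apply memℓp_gen
  exact (CCP.summable_sq f).comp_injective (add_left_injective w)

noncomputable def CCP.shift [AddGroup ι] (f : lp (fun _ : ι => H) 2) (w : ι) :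
    lp (fun _ : ι => H) 2 := ⟨fun j => f (j + w), CCP.memℓp_shift f w⟩

@[simp] lemma CCP.shift_apply [AddGroup ι] (f : lp (fun _ : ι => H) 2) (w : ι) (j : ι) :
    CCP.shift f w j = f (j + w) := rfl

lemma CCP.norm_shift [AddGroup ι] (f : lp (fun _ : ι => H) 2) (w : ι) :
    ‖CCP.shift f w‖ = ‖f‖ := by
  have h2 : (0:ℝ) < (2:ℝ≥0∞).toReal := by norm_num
  refine Real.rpow_left_injOn (by norm_num : (2:ℝ≥0∞).toReal ≠ 0)
    (norm_nonneg _) (norm_nonneg _) ?_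
  simp only
  rw [lp.norm_rpow_eq_tsum h2, lp.norm_rpow_eq_tsum h2]
  exact (Equiv.addRight w).tsum_eq (fun j => ‖f j‖ ^ (2:ℝ≥0∞).toReal)

lemma CCP.exists_sup_attained [Nonempty ι] (f : lp (fun _ : ι => H) 2) :
    ∃ j0 : ι, (⨆ j, ‖f j‖) = ‖f j0‖ ∧ ∀ j, ‖f j‖ ≤ ‖f j0‖ := by
  have bdd := CCP.bddAbove_norms f
  have key : ∃ j0 : ι, ∀ j, ‖f j‖ ≤ ‖f j0‖ := by
    by_cases hz : ∀ j : ι, ‖f j‖ = 0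
    · exact ⟨Classical.arbitrary ι, fun j => by rw [hz j, hz _]⟩
    · push_neg at hz
      obtain ⟨j1, hj1⟩ := hz
      have hj1pos : 0 < ‖f j1‖ := lt_of_le_of_ne (norm_nonneg _) (Ne.symm hj1)
      have hfin : {j : ι | ‖f j1‖ ≤ ‖f j‖}.Finite := by
        have ht := (CCP.summable_sq f).tendsto_cofinite_zero
        have hev := ht.eventually_lt_const
          (Real.rpow_pos_of_pos hj1pos (2:ℝ≥0∞).toReal)
        rw [Filter.eventually_cofinite] at hev
        refine hev.subset fun j hj => ?_
        simp only [Set.mem_setOf_eq, not_lt]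
        exact Real.rpow_le_rpow (norm_nonneg _) hj (by norm_num)
      have hne : hfin.toFinset.Nonempty := ⟨j1, by simp⟩
      obtain ⟨j0, hj0mem, hj0⟩ := hfin.toFinset.exists_max_image (fun j => ‖f j‖) hne
      refine ⟨j0, fun j => ?_⟩
      by_cases hj : j ∈ hfin.toFinset
      · exact hj0 j hj
      · have : ‖f j‖ < ‖f j1‖ := by
          simp only [Set.Finite.mem_toFinset, Set.mem_setOf_eq, not_le] at hj
          exact hj
        exact this.le.trans (hj0 j1 (by simp))
  obtain ⟨j0, hj0⟩ := key
  exact ⟨j0, le_antisymm (ciSup_le hj0) (le_ciSup bdd j0), hj0⟩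

lemma CCP.weak_tendsto_zero [DecidableEq ι] (f : ℕ → lp (fun _ : ι => H) 2) {C : ℝ}
    (hC : ∀ n, ‖f n‖ ≤ C)
    (hconv : ∀ j : ι, Tendsto (fun n => f n j) atTop (nhds 0))
    (y : lp (fun _ : ι => H) 2) :
    Tendsto (fun n => (inner ℝ (f n) y : ℝ)) atTop (nhds 0) := by
  have hC0 : (0:ℝ) < C + 1 := by
    have := (norm_nonneg (f 0)).trans (hC 0); linarith
  rw [NormedAddCommGroup.tendsto_nhds_zero]
  intro ε hε
  set δ := ε / (2 * (C + 1)) with hδdef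
  have hδ : 0 < δ := by positivity
  have hy := lp.hasSum_single (E := fun _ : ι => H) (by norm_num : (2:ℝ≥0∞) ≠ ⊤) y
  have : ∀ᶠ F in (atTop : Filter (Finset ι)),
      dist (∑ j ∈ F, lp.single 2 j (y j)) y < δ := Metric.tendsto_nhds.1 hy δ hδ
  obtain ⟨F, hF⟩ := this.exists
  set g : lp (fun _ : ι => H) 2 := ∑ j ∈ F, lp.single 2 j (y j) with hg
  have h1 : Tendsto (fun n => (inner ℝ (f n) g : ℝ)) atTop (nhds 0) := by
    have heq : ∀ n, (inner ℝ (f n) g : ℝ) = ∑ j ∈ F, (inner ℝ (f n j) (y j) : ℝ) := by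
      intro n
      rw [hg, inner_sum]
      exact Finset.sum_congr rfl fun j _ => lp.inner_single_right _ _ _
    simp only [heq]
    have : Tendsto (fun n => ∑ j ∈ F, (inner ℝ (f n j) (y j) : ℝ)) atTop
        (nhds (∑ j ∈ F, (inner ℝ (0:H) (y j) : ℝ))) :=
      tendsto_finset_sum _ fun j _ => (hconv j).inner tendsto_const_nhds
    simpa using this
  have h2 := (NormedAddCommGroup.tendsto_nhds_zero.1 h1) (ε/2) (half_pos hε)
  filter_upwards [h2] with n hn
  have hdec : (inner ℝ (f n) y : ℝ) = inner ℝ (f n) g + inner ℝ (f n) (y - g) := by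
    rw [inner_sub_right]; ring
  have hbound : |(inner ℝ (f n) (y - g) : ℝ)| ≤ (C + 1) * δ := by
    calc |(inner ℝ (f n) (y - g) : ℝ)| ≤ ‖f n‖ * ‖y - g‖ := abs_real_inner_le_norm _ _
    _ ≤ (C + 1) * δ := by
        apply mul_le_mul ((hC n).trans (by linarith)) ?_ (norm_nonneg _) (by linarith)
        rw [← dist_eq_norm, dist_comm]
        exact hF.le
  have hCδ : (C + 1) * δ = ε / 2 := by
    rw [hδdef]; field_simp
  rw [hdec]
  calc ‖(inner ℝ (f n) g : ℝ) + inner ℝ (f n) (y - g)‖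
      ≤ ‖(inner ℝ (f n) g : ℝ)‖ + ‖(inner ℝ (f n) (y - g) : ℝ)‖ := norm_add_le _ _
    _ < ε/2 + ε/2 := by
        apply add_lt_add_of_lt_of_le hn
        rw [← hCδ]; exact (Real.norm_eq_abs _) ▸ hbound
    _ = ε := by ring

end AuxCCP

/-- (First step of the abstract concentration-compactness lemma.)  A
bounded sequence in `ℓ²(ℤˢ,H)` whose components form a relatively compact subset of `H` and
which does not vanish in `ℓ^∞` admits, after passing to a subsequence, translations
`T_{−w_n}x_n` converging weakly to a nonzero profile `x¹` whose `ℓ^∞` norm is the limit of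
the `ℓ^∞` norms, together with the `ℓ²` norm splitting. -/
theorem concentration_first_profile {H : Type*} [NormedAddCommGroup H]
    [InnerProductSpace ℝ H] [CompleteSpace H] (s : ℕ)
    (x : ℕ → lp (fun _ : Fin s → ℤ => H) 2)
    (hbdd : ∃ M : ℝ, ∀ n, ‖x n‖ ≤ M)
    (hcpt : IsCompact (closure {h : H | ∃ n j, x n j = h}))
    (hnv : 0 < Filter.limsup (fun n => ⨆ j, ‖x n j‖) atTop) :
    ∃ φ : ℕ → ℕ, StrictMono φ ∧
      ∃ (w : ℕ → Fin s → ℤ) (x1 : lp (fun _ : Fin s → ℤ => H) 2),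
        x1 ≠ 0 ∧
        (∀ y : lp (fun _ : Fin s → ℤ => H) 2,
          Tendsto (fun n => ∑' j, (inner ℝ (x (φ n) (j + w n)) (y j) : ℝ)) atTop
            (nhds (∑' j, (inner ℝ (x1 j) (y j) : ℝ)))) ∧
        Tendsto (fun n => ⨆ j, ‖x (φ n) j‖) atTop (nhds (⨆ j, ‖x1 j‖)) ∧
        0 < ⨆ j, ‖x1 j‖ ∧
        ∃ A : ℝ,
          Tendsto (fun n => ‖x (φ n)‖ ^ 2) atTop (nhds (‖x1‖ ^ 2 + A)) ∧
          Tendsto (fun n => ∑' j, ‖x (φ n) j - x1 (j - w n)‖ ^ 2) atTop (nhds A) := by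
  classical
  obtain ⟨M, hM⟩ := hbdd
  have hM0 : 0 ≤ M := (norm_nonneg _).trans (hM 0)
  set u : ℕ → ℝ := fun n => ⨆ j, ‖x n j‖ with hu
  -- maximizers
  have hw0 : ∀ n, ∃ j0 : Fin s → ℤ, u n = ‖x n j0‖ ∧ ∀ j, ‖x n j‖ ≤ ‖x n j0‖ := fun n =>
    CCP.exists_sup_attained (x n)
  choose w0 hw0eq hw0le using hw0
  have hu0 : ∀ n, 0 ≤ u n := fun n => by rw [hw0eq n]; exact norm_nonneg _
  have hub : ∀ n, u n ≤ M := fun n =>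
    ciSup_le fun j => (lp.norm_apply_le_norm (by norm_num) (x n) j).trans (hM n)
  -- frequently large
  set c0 := Filter.limsup u atTop with hc0
  have hbd2 : Filter.IsBoundedUnder (· ≥ ·) atTop u := isBoundedUnder_of ⟨0, hu0⟩
  have hfreq : ∃ᶠ n in atTop, c0 / 2 < u n := by
    refine frequently_lt_of_lt_limsup hbd2.isCoboundedUnder_le ?_
    rw [← hc0]; linarith
  obtain ⟨ψ1, hψ1mono, hψ1⟩ := extraction_of_frequently_atTop hfreq
  -- Bolzano-Weierstrass for sup norms
  obtain ⟨c, -, ψ2, hψ2mono, hψ2⟩ :=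
    (isCompact_Icc (a := (0:ℝ)) (b := M)).tendsto_subseq
      (x := fun n => u (ψ1 n)) (fun n => ⟨hu0 _, hub _⟩)
  -- Bolzano-Weierstrass for norms squared
  obtain ⟨L, -, ψ3, hψ3mono, hψ3⟩ :=
    (isCompact_Icc (a := (0:ℝ)) (b := M^2)).tendsto_subseq
      (x := fun n => ‖x (ψ1 (ψ2 n))‖ ^ 2)
      (fun n => by
        refine Set.mem_Icc.2 ⟨by positivity, ?_⟩
        have h := hM (ψ1 (ψ2 n))
        have h0 := norm_nonneg (x (ψ1 (ψ2 n)))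
        show ‖x (ψ1 (ψ2 n))‖ ^ 2 ≤ M ^ 2
        nlinarith)
  set χ : ℕ → ℕ := fun n => ψ1 (ψ2 (ψ3 n)) with hχ
  -- compact extraction
  set K := closure {h : H | ∃ n j, x n j = h} with hK
  haveI : CompactSpace K := isCompact_iff_compactSpace.1 hcpt
  let g : ℕ → ((Fin s → ℤ) → K) := fun n j =>
    ⟨x (χ n) (j + w0 (χ n)), subset_closure ⟨χ n, _, rfl⟩⟩
  obtain ⟨z, ψ4, hψ4mono, hψ4⟩ := CompactSpace.tendsto_subseq g
  set φ : ℕ → ℕ := fun n => χ (ψ4 n) with hφ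
  have hφmono : StrictMono φ := (hψ1mono.comp (hψ2mono.comp hψ3mono)).comp hψ4mono
  set w : ℕ → (Fin s → ℤ) := fun n => w0 (φ n) with hw
  -- componentwise convergence
  have hconv : ∀ j : Fin s → ℤ, Tendsto (fun n => x (φ n) (j + w n)) atTop (nhds (z j : H)) := by
    intro j
    have := (tendsto_pi_nhds.1 hψ4) j
    exact (continuous_subtype_val.tendsto (z j)).comp this
  -- limits along φ
  have hc : Tendsto (fun n => u (φ n)) atTop (nhds c) := by
    have := hψ2.comp (hψ3mono.comp hψ4mono).tendsto_atTop
    exact this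
  have hL : Tendsto (fun n => ‖x (φ n)‖ ^ 2) atTop (nhds L) := by
    have := hψ3.comp hψ4mono.tendsto_atTop
    exact this
  have hcpos : 0 < c := by
    have hge : ∀ n, c0 / 2 ≤ u (φ n) := fun n => (hψ1 _).le
    have : c0 / 2 ≤ c := ge_of_tendsto' hc hge
    linarith
  -- the profile
  have hx1mem : Memℓp (fun j : Fin s → ℤ => (z j : H)) 2 := by
    refine memℓp_gen' (C := M ^ (2:ℝ≥0∞).toReal) ?_
    intro F
    have hlim : Tendsto (fun n => ∑ j ∈ F, ‖x (φ n) (j + w n)‖ ^ (2:ℝ≥0∞).toReal) atTop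
        (nhds (∑ j ∈ F, ‖(z j : H)‖ ^ (2:ℝ≥0∞).toReal)) :=
      tendsto_finset_sum _ fun j _ =>
        ((hconv j).norm).rpow_const (Or.inr (by norm_num))
    refine le_of_tendsto hlim (Eventually.of_forall fun n => ?_)
    have h1 : ∑ j ∈ F, ‖x (φ n) (j + w n)‖ ^ (2:ℝ≥0∞).toReal =
        ∑ j ∈ F, ‖CCP.shift (x (φ n)) (w n) j‖ ^ (2:ℝ≥0∞).toReal := rfl
    rw [h1]
    calc ∑ j ∈ F, ‖CCP.shift (x (φ n)) (w n) j‖ ^ (2:ℝ≥0∞).toReal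
        ≤ ‖CCP.shift (x (φ n)) (w n)‖ ^ (2:ℝ≥0∞).toReal :=
          lp.sum_rpow_le_norm_rpow (by norm_num) _ F
      _ ≤ M ^ (2:ℝ≥0∞).toReal := by
          rw [CCP.norm_shift]
          exact Real.rpow_le_rpow (norm_nonneg _) (hM _) (by norm_num)
  set x1 : lp (fun _ : Fin s → ℤ => H) 2 := ⟨fun j => (z j : H), hx1mem⟩ with hx1
  have hx1app : ∀ j, x1 j = (z j : H) := fun j => rfl
  set T : ℕ → lp (fun _ : Fin s → ℤ => H) 2 := fun n => CCP.shift (x (φ n)) (w n) with hT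
  have hTconv : ∀ j : Fin s → ℤ, Tendsto (fun n => T n j) atTop (nhds (x1 j)) := fun j => hconv j
  have hTnorm : ∀ n, ‖T n‖ = ‖x (φ n)‖ := fun n => CCP.norm_shift _ _
  -- c = ‖x1 0‖
  have hx1zero : c = ‖x1 0‖ := by
    have h1 : Tendsto (fun n => ‖x (φ n) (0 + w n)‖) atTop (nhds ‖x1 0‖) := (hconv 0).norm
    have h2 : ∀ n, ‖x (φ n) (0 + w n)‖ = u (φ n) := by
      intro n; rw [zero_add]; exact (hw0eq (φ n)).symm
    simp only [h2] at h1
    exact tendsto_nhds_unique hc h1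
  -- sup of x1
  have hsup : (⨆ j, ‖x1 j‖) = c := by
    refine le_antisymm (ciSup_le fun j => ?_) (hx1zero ▸ le_ciSup (CCP.bddAbove_norms x1) 0)
    refine le_of_tendsto_of_tendsto' (hconv j).norm hc fun n => ?_
    exact (hw0le (φ n) (j + w n)).trans (hw0eq (φ n)).ge
  have hsuppos : 0 < ⨆ j, ‖x1 j‖ := hsup ▸ hcpos
  -- weak convergence
  have hbT : ∀ n, ‖T n - x1‖ ≤ M + ‖x1‖ := fun n => by
    calc ‖T n - x1‖ ≤ ‖T n‖ + ‖x1‖ := norm_sub_le _ _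
    _ ≤ M + ‖x1‖ := by rw [hTnorm]; linarith [hM (φ n)]
  have hdiffconv : ∀ j : Fin s → ℤ, Tendsto (fun n => (T n - x1) j) atTop (nhds 0) := by
    intro j
    have h1 : ∀ n, (T n - x1) j = T n j - x1 j := fun n => by
      rw [lp.coeFn_sub]; rfl
    simp only [h1]
    simpa using (hTconv j).sub_const (x1 j)
  have hweak : ∀ y : lp (fun _ : Fin s → ℤ => H) 2,
      Tendsto (fun n => (inner ℝ (T n) y : ℝ)) atTop (nhds (inner ℝ x1 y : ℝ)) := by
    intro y
    have h0 := CCP.weak_tendsto_zero (fun n => T n - x1) hbT hdiffconv y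
    have heq : ∀ n, (inner ℝ (T n) y : ℝ) = inner ℝ (T n - x1) y + inner ℝ x1 y := fun n => by
      rw [inner_sub_left]; ring
    simp only [heq]
    simpa using h0.add_const (inner ℝ x1 y : ℝ)
  have hweak' : ∀ y : lp (fun _ : Fin s → ℤ => H) 2,
      Tendsto (fun n => ∑' j, (inner ℝ (x (φ n) (j + w n)) (y j) : ℝ)) atTop
        (nhds (∑' j, (inner ℝ (x1 j) (y j) : ℝ))) := by
    intro y
    have h1 : ∀ n, ∑' j, (inner ℝ (x (φ n) (j + w n)) (y j) : ℝ) = (inner ℝ (T n) y : ℝ) :=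
      fun n => (lp.inner_eq_tsum (T n) y).symm
    have h2 : ∑' j, (inner ℝ (x1 j) (y j) : ℝ) = (inner ℝ x1 y : ℝ) :=
      (lp.inner_eq_tsum x1 y).symm
    simp only [h1, h2]
    exact hweak y
  -- x1 ≠ 0
  have hx1ne : x1 ≠ 0 := by
    intro h
    rw [h] at hsuppos
    have : (⨆ j : Fin s → ℤ, ‖(0 : lp (fun _ : Fin s → ℤ => H) 2) j‖) = 0 := by
      simp [lp.coeFn_zero]
    rw [this] at hsuppos
    exact lt_irrefl _ hsuppos
  -- norm splitting
  have hinner : Tendsto (fun n => (inner ℝ (T n) x1 : ℝ)) atTop (nhds (‖x1‖ ^ 2)) := by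
    have := hweak x1
    rwa [real_inner_self_eq_norm_sq] at this
  set A : ℝ := L - ‖x1‖ ^ 2 with hA
  have hTsub : Tendsto (fun n => ‖T n - x1‖ ^ 2) atTop (nhds A) := by
    have hexp : ∀ n, ‖T n - x1‖ ^ 2 = ‖x (φ n)‖ ^ 2 - 2 * (inner ℝ (T n) x1 : ℝ) + ‖x1‖ ^ 2 :=
      fun n => by rw [norm_sub_sq_real, hTnorm]
    simp only [hexp]
    have : Tendsto (fun n => ‖x (φ n)‖ ^ 2 - 2 * (inner ℝ (T n) x1 : ℝ) + ‖x1‖ ^ 2) atTop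
        (nhds (L - 2 * ‖x1‖ ^ 2 + ‖x1‖ ^ 2)) :=
      (hL.sub (hinner.const_mul 2)).add_const _
    convert this using 2
    rw [hA]; ring
  have hsubeq : ∀ n, ∑' j, ‖x (φ n) j - x1 (j - w n)‖ ^ 2 = ‖T n - x1‖ ^ 2 := by
    intro n
    have h1 : ∑' j, ‖x (φ n) j - x1 (j - w n)‖ ^ 2
        = ∑' j, ‖x (φ n) (j + w n) - x1 (j + w n - w n)‖ ^ 2 :=
      ((Equiv.addRight (w n)).tsum_eq fun j => ‖x (φ n) j - x1 (j - w n)‖ ^ 2).symm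
    have h2 : ∀ j : Fin s → ℤ, ‖x (φ n) (j + w n) - x1 (j + w n - w n)‖ ^ 2 = ‖(T n - x1) j‖ ^ 2 := by
      intro j
      rw [add_sub_cancel_right, lp.coeFn_sub]
      rfl
    rw [h1, tsum_congr h2]
    have h3 := lp.norm_rpow_eq_tsum (by norm_num : (0:ℝ) < (2:ℝ≥0∞).toReal) (T n - x1)
    rw [CCP.rpow_toReal_two] at h3
    rw [h3]
    exact tsum_congr fun j => (CCP.rpow_toReal_two _).symm
  have hfirst : Tendsto (fun n => ‖x (φ n)‖ ^ 2) atTop (nhds (‖x1‖ ^ 2 + A)) := by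
    have : ‖x1‖ ^ 2 + A = L := by rw [hA]; ring
    rwa [this]
  refine ⟨φ, hφmono, w, x1, hx1ne, hweak', ?_, hsuppos, A, hfirst, ?_⟩
  · rw [hsup]; exact hc
  · simp only [hsubeq]; exact hTsub
end

section
/- Let U be an open subset of a Banach space X, T : U → ℝ a C¹ functional, and G(ζ) = dT[ζ](ζ) with N = {ζ ∈ U : ζ ≠ 0, G(ζ) = 0}. Suppose ζ* ∈ N minimises T over N, T and G are C¹ near ζ*, and dG[ζ*](ζ*) = d²T[ζ*](ζ*,ζ*) ≠ 0. Then dT[ζ*] = 0, i.e. every ground state is a critical point of T. -/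
/-- (Remark `ground states`.)  Every ground state, i.e. every minimiser
`ζ*` of `T` over the natural constraint set `N = {ζ ∈ U : ζ ≠ 0, dT[ζ](ζ) = 0}` at which
`dG[ζ*](ζ*) = d²T[ζ*](ζ*,ζ*) ≠ 0`, is a critical point of `T`. -/
theorem ground_state_is_critical_point {X : Type*} [NormedAddCommGroup X]
    [NormedSpace ℝ X] [CompleteSpace X]
    (U : Set X) (hU : IsOpen U) (T : X → ℝ) (DT : X → (X →L[ℝ] ℝ))
    (hT : ∀ ζ ∈ U, HasFDerivAt T (DT ζ) ζ)
    (DG : X →L[ℝ] ℝ) (ζs : X) (hζU : ζs ∈ U) (hζne : ζs ≠ 0)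
    (hζN : DT ζs ζs = 0)
    (hTder : HasStrictFDerivAt T (DT ζs) ζs)
    (hGder : HasStrictFDerivAt (fun ζ : X => DT ζ ζ) DG ζs)
    (hmin : ∀ ζ ∈ U, ζ ≠ 0 → DT ζ ζ = 0 → T ζs ≤ T ζ)
    (hDG : DG ζs ≠ 0) :
    DT ζs = 0 := by
  set G : X → ℝ := fun ζ => DT ζ ζ with hG
  have hextr : IsLocalExtrOn T {x | G x = G ζs} ζs := by
    apply Or.inl
    have hV : (U ∩ {0}ᶜ : Set X) ∈ nhdsWithin ζs {x | G x = G ζs} := by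
      apply mem_nhdsWithin_of_mem_nhds
      exact (hU.inter isOpen_compl_singleton).mem_nhds ⟨hζU, hζne⟩
    have hs : {x | G x = G ζs} ∈ nhdsWithin ζs {x | G x = G ζs} := self_mem_nhdsWithin
    filter_upwards [hV, hs] with x hx hGx
    exact hmin x hx.1 hx.2 (by simpa [hG, hζN] using hGx)
  obtain ⟨a, b, hab, h⟩ :=
    hextr.exists_multipliers_of_hasStrictFDerivAt_1d hGder hTder
  have h0 := congrArg (fun L : X →L[ℝ] ℝ => L ζs) h
  simp only [ContinuousLinearMap.add_apply, ContinuousLinearMap.coe_smul',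
    Pi.smul_apply, smul_eq_mul, ContinuousLinearMap.zero_apply, hζN, mul_zero,
    add_zero] at h0
  have ha : a = 0 := by
    rcases mul_eq_zero.1 h0 with h | h
    · exact h
    · exact absurd h hDG
  have hb : b ≠ 0 := by
    intro hb
    exact hab (by simp [ha, hb, Prod.ext_iff])
  ext x
  have hx := congrArg (fun L : X →L[ℝ] ℝ => L x) h
  simp only [ContinuousLinearMap.add_apply, ContinuousLinearMap.coe_smul',
    Pi.smul_apply, smul_eq_mul, ContinuousLinearMap.zero_apply, ha, zero_mul,
    zero_add] at hx
  simpa using (mul_eq_zero.1 hx).resolve_left hb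
end

section
/- Let f(ω) = ω coth ω for ω > 0, and define β = f'(ω)/(2ω f(ω) − ω² f'(ω)) and Λ = 2ω/(2ω f(ω) − ω² f'(ω)). Then the coefficient C₂ = g(2ω)⁻¹Λ²A(ω)²/16 + Λ²B(ω)²/32 + 3βω⁴/64 + (Λ f(ω)/16)(f(ω)f(2ω) − 3ω²) is strictly positive, where A(ω) = (3ω² − f(ω)² − 2f(ω)f(2ω))/2, B(ω) = ω² − f(ω)², and g(2ω) = 1 + 4βω² − Λ f(2ω) > 0. -/
/-- For `x > 0`, `sinh x < x * cosh x`. -/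
lemma sinh_lt_mul_cosh {x : ℝ} (hx : 0 < x) : Real.sinh x < x * Real.cosh x := by
  have mono : StrictMonoOn (fun z : ℝ => z * Real.cosh z - Real.sinh z) (Set.Ici 0) := by
    apply strictMonoOn_of_deriv_pos (convex_Ici 0)
    · exact ((continuous_id.mul Real.continuous_cosh).sub Real.continuous_sinh).continuousOn
    · intro y hy
      rw [interior_Ici, Set.mem_Ioi] at hy
      have hd : HasDerivAt (fun z : ℝ => z * Real.cosh z - Real.sinh z)
          (1 * Real.cosh y + y * Real.sinh y - Real.cosh y) y :=
        ((hasDerivAt_id' (x := y)).mul (Real.hasDerivAt_cosh y)).sub (Real.hasDerivAt_sinh y)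
      rw [hd.deriv]
      have := Real.sinh_pos_iff.mpr hy
      nlinarith
  have h0 := mono Set.self_mem_Ici (Set.mem_Ici.mpr hx.le) hx
  simp only [Real.cosh_zero, Real.sinh_zero, zero_mul, mul_one, sub_zero] at h0
  linarith

/-- For `x > 0`, `3 x cosh x < 3 sinh x + sinh x ^ 3`. -/
lemma three_mul_cosh_lt {x : ℝ} (hx : 0 < x) :
    3 * (x * Real.cosh x) < 3 * Real.sinh x + Real.sinh x ^ 3 := by
  have mono : StrictMonoOn
      (fun z : ℝ => 3 * Real.sinh z + Real.sinh z ^ 3 - 3 * (z * Real.cosh z)) (Set.Ici 0) := by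
    apply strictMonoOn_of_deriv_pos (convex_Ici 0)
    · exact (((continuous_const.mul Real.continuous_sinh).add
        (Real.continuous_sinh.pow 3)).sub
        (continuous_const.mul (continuous_id.mul Real.continuous_cosh))).continuousOn
    · intro y hy
      rw [interior_Ici, Set.mem_Ioi] at hy
      have hd : HasDerivAt
          (fun z : ℝ => 3 * Real.sinh z + Real.sinh z ^ 3 - 3 * (z * Real.cosh z))
          (3 * Real.cosh y + (3 : ℕ) * Real.sinh y ^ 2 * Real.cosh y
            - 3 * (1 * Real.cosh y + y * Real.sinh y)) y := by
        have h1 := (Real.hasDerivAt_sinh y).const_mul (3 : ℝ)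
        have h2 := (Real.hasDerivAt_sinh y).pow 3
        have h3 := ((hasDerivAt_id' (x := y)).mul (Real.hasDerivAt_cosh y)).const_mul (3 : ℝ)
        have := (h1.add h2).sub h3
        exact this.congr_deriv (by norm_num)
      rw [hd.deriv]
      have hsy : 0 < Real.sinh y := Real.sinh_pos_iff.mpr hy
      have hy2 : y < Real.sinh y * Real.cosh y := by
        have h2y := Real.self_lt_sinh_iff.mpr (by linarith : (0 : ℝ) < 2 * y)
        rw [Real.sinh_two_mul] at h2y
        linarith
      have : (3 : ℕ) * Real.sinh y ^ 2 * Real.cosh y = 3 * Real.sinh y ^ 2 * Real.cosh y := by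
        norm_num
      rw [this]
      nlinarith
  have h0 := mono Set.self_mem_Ici (Set.mem_Ici.mpr hx.le) hx
  simp only [Real.cosh_zero, Real.sinh_zero, zero_mul, mul_zero, mul_one, sub_zero,
    add_zero, zero_add, zero_pow, ne_eq, OfNat.ofNat_ne_zero, not_false_eq_true] at h0
  nlinarith [h0]

set_option maxHeartbeats 2000000 in
/-- Positivity of the Davey–Stewartson coefficient `C₂`, after
substituting `β = f'(ω)/(2ωf(ω) − ω²f'(ω))` and `Λ = 2ω/(2ωf(ω) − ω²f'(ω))`, where
`f(s) = s coth s`.  The claim also includes `g(2ω) = 1 + 4βω² − Λf(2ω) > 0`. -/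
theorem C2_positive (ω : ℝ) (hω : 0 < ω) :
    let f : ℝ → ℝ := fun s => s * (Real.cosh s / Real.sinh s)
    let fp : ℝ → ℝ := deriv f
    let β := fp ω / (2 * ω * f ω - ω ^ 2 * fp ω)
    let Λ := 2 * ω / (2 * ω * f ω - ω ^ 2 * fp ω)
    let A := (3 * ω ^ 2 - f ω ^ 2 - 2 * f ω * f (2 * ω)) / 2
    let B := ω ^ 2 - f ω ^ 2
    let g2 := 1 + 4 * β * ω ^ 2 - Λ * f (2 * ω)
    let C₂ := g2⁻¹ * Λ ^ 2 * A ^ 2 / 16 + Λ ^ 2 * B ^ 2 / 32 + 3 * β * ω ^ 4 / 64 +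
      Λ * f ω / 16 * (f ω * f (2 * ω) - 3 * ω ^ 2)
    0 < g2 ∧ 0 < C₂ := by
  intro f fp β Λ A B g2 C₂
  have hs : 0 < Real.sinh ω := Real.sinh_pos_iff.mpr hω
  have hh0 : 0 < Real.cosh ω := Real.cosh_pos ω
  set s : ℝ := Real.sinh ω with hsdef
  set h : ℝ := Real.cosh ω with hhdef
  have hh : h ^ 2 = 1 + s ^ 2 := Real.cosh_sq' ω
  have hsne : s ≠ 0 := ne_of_gt hs
  have hhne : h ≠ 0 := ne_of_gt hh0
  have hωne : ω ≠ 0 := ne_of_gt hω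
  -- the three transcendental inequalities
  have h2 : s < ω * h := by
    have := sinh_lt_mul_cosh hω
    rw [← hsdef, ← hhdef] at this
    exact this
  have h3 : ω < s * h := by
    have h2y := Real.self_lt_sinh_iff.mpr (by linarith : (0 : ℝ) < 2 * ω)
    rw [Real.sinh_two_mul, ← hsdef, ← hhdef] at h2y
    linarith
  have h4 : 3 * (ω * h) < 3 * s + s ^ 3 := by
    have := three_mul_cosh_lt hω
    rw [← hsdef, ← hhdef] at this
    exact this
  -- values of f and its derivative
  have hfw : f ω = ω * (h / s) := rfl
  have hf2w : f (2 * ω) = ω * (h ^ 2 + s ^ 2) / (s * h) := by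
    show 2 * ω * (Real.cosh (2 * ω) / Real.sinh (2 * ω)) = _
    rw [Real.cosh_two_mul, Real.sinh_two_mul, ← hsdef, ← hhdef]
    field_simp
  have hfp : fp ω = h / s - ω / s ^ 2 := by
    show deriv f ω = _
    have hsne' : Real.sinh ω ≠ 0 := hsne
    have hd : HasDerivAt f
        (1 * (h / s) + ω * ((s * s - h * h) / s ^ 2)) ω :=
      (hasDerivAt_id' (x := ω)).mul
        ((Real.hasDerivAt_cosh ω).div (Real.hasDerivAt_sinh ω) hsne')
    rw [hd.deriv]
    have hone : s * s - h * h = -1 := by linear_combination -1 * hh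
    rw [hone]
    ring
  -- abbreviations
  set e : ℝ := s * h + ω with hedef
  set m : ℝ := 3 * h ^ 2 * s - 2 * s ^ 3 - 3 * ω * h with hmdef
  have he : 0 < e := by rw [hedef]; positivity
  have hene : e ≠ 0 := ne_of_gt he
  have hm : 0 < m := by
    have hmval : m = 3 * s + s ^ 3 - 3 * (ω * h) := by
      rw [hmdef]; linear_combination 3 * s * hh
    rw [hmval]
    linarith
  have hmne : m ≠ 0 := ne_of_gt hm
  -- the denominator 2ωf(ω) − ω²f'(ω)
  have hDval : 2 * ω * f ω - ω ^ 2 * fp ω = ω ^ 2 * e / s ^ 2 := by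
    rw [hfw, hfp, hedef]
    field_simp
    ring
  have hβ : β = (s * h - ω) / (ω ^ 2 * e) := by
    show fp ω / (2 * ω * f ω - ω ^ 2 * fp ω) = (s * h - ω) / (ω ^ 2 * e)
    rw [hDval, hfp]
    field_simp
  have hΛ : Λ = 2 * s ^ 2 / (ω * e) := by
    show 2 * ω / (2 * ω * f ω - ω ^ 2 * fp ω) = 2 * s ^ 2 / (ω * e)
    rw [hDval]
    field_simp
  have hg2 : g2 = m / (e * h) := by
    show 1 + 4 * β * ω ^ 2 - Λ * f (2 * ω) = m / (e * h)
    rw [hβ, hΛ, hf2w, hedef, hmdef]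
    field_simp
    ring
  have hg2pos : 0 < g2 := by
    rw [hg2]
    exact div_pos hm (mul_pos he hh0)
  refine ⟨hg2pos, ?_⟩
  -- values of A and B
  have hA : A = ω ^ 2 * (s ^ 2 - 3 * h ^ 2) / (2 * s ^ 2) := by
    show (3 * ω ^ 2 - f ω ^ 2 - 2 * f ω * f (2 * ω)) / 2 = _
    rw [hfw, hf2w]
    field_simp
    ring
  have hB : B = ω ^ 2 * (s ^ 2 - h ^ 2) / s ^ 2 := by
    show ω ^ 2 - f ω ^ 2 = _
    rw [hfw]
    field_simp
  -- the key rational expression for C₂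
  have hC : C₂ = ω ^ 2 * (4 * h * s * e * (s ^ 2 - 3 * h ^ 2) ^ 2
      + 8 * s * m * (s ^ 2 - h ^ 2) ^ 2 + 3 * s * (s * h - ω) * e * m
      + 8 * h * e * m * (h ^ 2 - 2 * s ^ 2)) / (64 * s * e ^ 2 * m) := by
    show g2⁻¹ * Λ ^ 2 * A ^ 2 / 16 + Λ ^ 2 * B ^ 2 / 32 + 3 * β * ω ^ 4 / 64 +
      Λ * f ω / 16 * (f ω * f (2 * ω) - 3 * ω ^ 2) = _
    rw [hg2, hβ, hΛ, hA, hB, hfw, hf2w]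
    field_simp
    ring
  -- positivity of the numerator polynomial
  have hXnn : 0 ≤ h * (s * h - ω) := mul_nonneg hh0.le (by linarith)
  have hYnn : 0 ≤ ω * h - s := by linarith
  have hs3 : 0 ≤ s ^ 3 := pow_nonneg hs.le 3
  have hK1 : 0 ≤ 9 * (h * (s * h - ω)) ^ 2 - 39 * (h * (s * h - ω)) * s ^ 3 + 53 * s ^ 6 := by
    nlinarith [sq_nonneg (6 * (h * (s * h - ω)) - 13 * s ^ 3), pow_pos hs 6]
  have t1 : 0 ≤ s ^ 3 * (ω * h - s) *
      (9 * (h * (s * h - ω)) ^ 2 - 39 * (h * (s * h - ω)) * s ^ 3 + 53 * s ^ 6) :=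
    mul_nonneg (mul_nonneg hs3 hYnn) hK1
  have t2 : 0 ≤ s ^ 4 * (68 * s ^ 6 + 124 * (ω * h - s) * s ^ 3 + 18 * (h * (s * h - ω)) ^ 2) := by
    have := mul_nonneg hYnn hs3
    have := sq_nonneg (h * (s * h - ω))
    have := pow_nonneg hs.le 6
    have hbr : 0 ≤ 68 * s ^ 6 + 124 * ((ω * h - s) * s ^ 3) + 18 * (h * (s * h - ω)) ^ 2 := by
      linarith
    nlinarith [pow_nonneg hs.le 4, hbr]
  have t3 : 0 ≤ s ^ 2 * (224 * s ^ 6 + 4 * (h * (s * h - ω)) * s ^ 3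
      + 24 * (ω * h - s) * (s ^ 3 + h * (s * h - ω))) := by
    have hXs3 := mul_nonneg hXnn hs3
    have hYX : 0 ≤ (ω * h - s) * (s ^ 3 + h * (s * h - ω)) :=
      mul_nonneg hYnn (by linarith)
    have := pow_nonneg hs.le 6
    have hbr : 0 ≤ 224 * s ^ 6 + 4 * (h * (s * h - ω) * s ^ 3)
        + 24 * ((ω * h - s) * (s ^ 3 + h * (s * h - ω))) := by linarith
    nlinarith [sq_nonneg s, hbr]
  have t4 : 0 ≤ s ^ 3 * (192 * s ^ 3 + 36 * (h * (s * h - ω))) := by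
    have hbr : 0 ≤ 192 * s ^ 3 + 36 * (h * (s * h - ω)) := by linarith
    exact mul_nonneg hs3 hbr
  have hkey : h ^ 2 * s ^ 2 * (4 * h * s * (s * h + ω) * (s ^ 2 - 3 * h ^ 2) ^ 2
      + 8 * s * (3 * h ^ 2 * s - 2 * s ^ 3 - 3 * ω * h) * (s ^ 2 - h ^ 2) ^ 2
      + 3 * s * (s * h - ω) * (s * h + ω) * (3 * h ^ 2 * s - 2 * s ^ 3 - 3 * ω * h)
      + 8 * h * (s * h + ω) * (3 * h ^ 2 * s - 2 * s ^ 3 - 3 * ω * h) * (h ^ 2 - 2 * s ^ 2)) =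
      11 * s ^ 12
      + s ^ 3 * (ω * h - s) *
        (9 * (h * (s * h - ω)) ^ 2 - 39 * (h * (s * h - ω)) * s ^ 3 + 53 * s ^ 6)
      + s ^ 4 * (68 * s ^ 6 + 124 * (ω * h - s) * s ^ 3 + 18 * (h * (s * h - ω)) ^ 2)
      + s ^ 2 * (224 * s ^ 6 + 4 * (h * (s * h - ω)) * s ^ 3
          + 24 * (ω * h - s) * (s ^ 3 + h * (s * h - ω)))
      + s ^ 3 * (192 * s ^ 3 + 36 * (h * (s * h - ω))) + 72 * s ^ 4 := by
    linear_combination (33 * ω ^ 2 * s ^ 4 * h ^ 2 - 24 * ω ^ 2 * s ^ 2 * h ^ 4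
      - 24 * ω ^ 2 * s ^ 2 * h ^ 2 + 53 * ω * s ^ 7 * h + 2 * ω * s ^ 5 * h ^ 3
      + 32 * ω * s ^ 5 * h + 12 * ω * s ^ 3 * h ^ 5 + 12 * ω * s ^ 3 * h ^ 3
      - 12 * ω * s ^ 3 * h + 11 * s ^ 10 + 27 * s ^ 8 * h ^ 2 + 4 * s ^ 8
      - 59 * s ^ 6 * h ^ 4 + 16 * s ^ 6 * h ^ 2 + 96 * s ^ 6 + 84 * s ^ 4 * h ^ 6
      + 84 * s ^ 4 * h ^ 4 + 84 * s ^ 4 * h ^ 2 + 72 * s ^ 4) * hh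
  have hnum : 0 < 4 * h * s * e * (s ^ 2 - 3 * h ^ 2) ^ 2
      + 8 * s * m * (s ^ 2 - h ^ 2) ^ 2 + 3 * s * (s * h - ω) * e * m
      + 8 * h * e * m * (h ^ 2 - 2 * s ^ 2) := by
    rw [hedef, hmdef]
    have hpos : 0 < h ^ 2 * s ^ 2 * (4 * h * s * (s * h + ω) * (s ^ 2 - 3 * h ^ 2) ^ 2
        + 8 * s * (3 * h ^ 2 * s - 2 * s ^ 3 - 3 * ω * h) * (s ^ 2 - h ^ 2) ^ 2
        + 3 * s * (s * h - ω) * (s * h + ω) * (3 * h ^ 2 * s - 2 * s ^ 3 - 3 * ω * h)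
        + 8 * h * (s * h + ω) * (3 * h ^ 2 * s - 2 * s ^ 3 - 3 * ω * h)
          * (h ^ 2 - 2 * s ^ 2)) := by
      rw [hkey]
      have h11 : 0 < 11 * s ^ 12 := by positivity
      have h72 : 0 < 72 * s ^ 4 := by positivity
      linarith
    have hh2s2 : 0 < h ^ 2 * s ^ 2 := by positivity
    nlinarith [hpos, hh2s2]
  rw [hC]
  exact div_pos (mul_pos (pow_pos hω 2) hnum)
    (mul_pos (mul_pos (mul_pos (by norm_num : (0 : ℝ) < 64) hs) (pow_pos he 2)) hm)
end

section
/- Let K₀ be the Fourier multiplier operator on ℝ² with symbol (k₁²/|k|²) f(|k|), where f(s) = s coth s. Then the map η ↦ (η² + β η_x² + β η_z²)_{L¹} − (1−ε²)Λ ⟨η, K₀η⟩_{L²}, i.e. the quadratic form B(η) = ∫_{ℝ²}(η² + βη_x² + βη_z²) dx dz − (1−ε²)Λ∫_{ℝ²} η K₀η dx dz, satisfies B(η) ≥ c ‖η‖_{H¹}² for some constant c > 0 independent of η ∈ H¹(ℝ²), for all sufficiently small ε > 0; hence B(·)^{1/2} defines a norm on H¹(ℝ²) equivalent to the usual one. 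-/
open MeasureTheory

lemma fcoth_nonneg {s : ℝ} (hs : 0 ≤ s) : 0 ≤ fcoth s := by
  unfold fcoth
  split_ifs with h
  · norm_num
  · have hs' : 0 < s := lt_of_le_of_ne hs (Ne.symm h)
    have h1 : 0 < Real.sinh s := Real.sinh_pos_iff.2 hs'
    have h2 : 0 < Real.cosh s := Real.cosh_pos s
    positivity

lemma measurable_fcoth : Measurable fcoth := by
  unfold fcoth
  exact Measurable.ite (measurableSet_eq_fun measurable_id measurable_const)
    measurable_const
    (measurable_id.mul (Real.measurable_cosh.div Real.measurable_sinh))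

lemma symbol_bounds (β Λ ε : ℝ) (hβ0 : 0 < β) (hΛ : 0 < Λ) (hε : 0 < ε) (hε1 : ε < 1)
    (hβ1 : β < 1)
    (hmin : ∀ s : ℝ, 0 ≤ s → Λ * fcoth s ≤ 1 + β * s ^ 2) (k : ℝ × ℝ) :
    ε ^ 2 * β * (1 + (k.1 ^ 2 + k.2 ^ 2)) ≤
      1 + β * (k.1 ^ 2 + k.2 ^ 2) -
      (1 - ε ^ 2) * Λ * (k.1 ^ 2 / (k.1 ^ 2 + k.2 ^ 2)) *
        fcoth (Real.sqrt (k.1 ^ 2 + k.2 ^ 2)) ∧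
      1 + β * (k.1 ^ 2 + k.2 ^ 2) -
      (1 - ε ^ 2) * Λ * (k.1 ^ 2 / (k.1 ^ 2 + k.2 ^ 2)) *
        fcoth (Real.sqrt (k.1 ^ 2 + k.2 ^ 2)) ≤ (1 + β) * (1 + (k.1 ^ 2 + k.2 ^ 2)) := by
  obtain ⟨a, b⟩ := k
  simp only
  set q : ℝ := a ^ 2 + b ^ 2 with hq
  have hq0 : 0 ≤ q := by positivity
  have hf0 : 0 ≤ fcoth (Real.sqrt q) := fcoth_nonneg (Real.sqrt_nonneg q)
  set F : ℝ := fcoth (Real.sqrt q) with hF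
  have hr0 : 0 ≤ a ^ 2 / q := by positivity
  have hr1 : a ^ 2 / q ≤ 1 := div_le_one_of_le₀ (by nlinarith [sq_nonneg b]) hq0
  have hΛf : Λ * F ≤ 1 + β * q := by
    have := hmin (Real.sqrt q) (Real.sqrt_nonneg q)
    rwa [Real.sq_sqrt hq0] at this
  have hΛf0 : 0 ≤ Λ * F := by positivity
  have hεsq : ε ^ 2 ≤ 1 := by nlinarith
  have h1 : Λ * (a ^ 2 / q) * F ≤ 1 + β * q := by
    nlinarith [mul_le_mul_of_nonneg_right hr1 hΛf0]
  have h2 : 0 ≤ Λ * (a ^ 2 / q) * F := by positivity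
  constructor
  · nlinarith [mul_le_mul_of_nonneg_left h1 (by linarith : (0:ℝ) ≤ 1 - ε ^ 2),
      mul_nonneg (sq_nonneg ε) hq0, mul_nonneg (sq_nonneg ε) (by linarith : (0:ℝ) ≤ 1 - β)]
  · nlinarith [mul_nonneg (mul_nonneg (by linarith : (0:ℝ) ≤ 1 - ε^2) hΛf0) hr0]

/-- The quadratic form
`B(η) = ∫ (η² + βη_x² + βη_z²) − (1−ε²)Λ ∫ η K₀η`, written in Fourier variables as
`∫ (1 + β|k|² − (1−ε²)Λ(k₁²/|k|²)f(|k|)) |η̂(k)|² dk`, is, for all sufficiently small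
`ε > 0`, bounded below by `c ∫ (1+|k|²)|η̂|²` and above by `C ∫ (1+|k|²)|η̂|²` with
constants independent of `η`; hence `B(·)^{1/2}` defines a norm equivalent to the `H¹`
norm. -/
theorem quadratic_form_equivalent_norm (β Λ ω : ℝ) (hβ0 : 0 < β) (hβ : β < 1 / 3)
    (hω : 0 < ω) (hΛ : 0 < Λ)
    (hmin : ∀ s : ℝ, 0 ≤ s → Λ * fcoth s ≤ 1 + β * s ^ 2)
    (heq : 1 + β * ω ^ 2 = Λ * fcoth ω)
    (hstrict : ∀ s : ℝ, 0 ≤ s → s ≠ ω → Λ * fcoth s < 1 + β * s ^ 2) :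
    ∃ ε₀ > (0 : ℝ), ∀ ε : ℝ, 0 < ε → ε < ε₀ →
      ∃ c > (0 : ℝ), ∃ C > (0 : ℝ), ∀ ηhat : ℝ × ℝ → ℂ, Measurable ηhat →
        Integrable (fun k : ℝ × ℝ => (1 + β * (k.1 ^ 2 + k.2 ^ 2)) * ‖ηhat k‖ ^ 2) →
        (c * ∫ k : ℝ × ℝ, (1 + (k.1 ^ 2 + k.2 ^ 2)) * ‖ηhat k‖ ^ 2) ≤
          (∫ k : ℝ × ℝ,
            (1 + β * (k.1 ^ 2 + k.2 ^ 2) -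
              (1 - ε ^ 2) * Λ * (k.1 ^ 2 / (k.1 ^ 2 + k.2 ^ 2)) *
                fcoth (Real.sqrt (k.1 ^ 2 + k.2 ^ 2))) * ‖ηhat k‖ ^ 2) ∧
        (∫ k : ℝ × ℝ,
            (1 + β * (k.1 ^ 2 + k.2 ^ 2) -
              (1 - ε ^ 2) * Λ * (k.1 ^ 2 / (k.1 ^ 2 + k.2 ^ 2)) *
                fcoth (Real.sqrt (k.1 ^ 2 + k.2 ^ 2))) * ‖ηhat k‖ ^ 2) ≤
          C * ∫ k : ℝ × ℝ, (1 + (k.1 ^ 2 + k.2 ^ 2)) * ‖ηhat k‖ ^ 2 := by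
  refine ⟨1, by norm_num, fun ε hε hε1 => ?_⟩
  refine ⟨ε ^ 2 * β, by positivity, 1 + β, by positivity, fun ηhat hmeas hInt => ?_⟩
  have hβ1 : β < 1 := by linarith
  have key := symbol_bounds β Λ ε hβ0 hΛ hε hε1 hβ1 hmin
  set m : ℝ × ℝ → ℝ := fun k =>
    1 + β * (k.1 ^ 2 + k.2 ^ 2) -
      (1 - ε ^ 2) * Λ * (k.1 ^ 2 / (k.1 ^ 2 + k.2 ^ 2)) *
        fcoth (Real.sqrt (k.1 ^ 2 + k.2 ^ 2)) with hm
  set A : ℝ × ℝ → ℝ := fun k => (1 + (k.1 ^ 2 + k.2 ^ 2)) * ‖ηhat k‖ ^ 2 with hA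
  -- pointwise bounds on integrands
  have keyL : ∀ k, (ε ^ 2 * β) * A k ≤ m k * ‖ηhat k‖ ^ 2 := by
    intro k
    have h := (key k).1
    have hn : (0:ℝ) ≤ ‖ηhat k‖ ^ 2 := by positivity
    calc (ε ^ 2 * β) * A k = (ε ^ 2 * β * (1 + (k.1 ^ 2 + k.2 ^ 2))) * ‖ηhat k‖ ^ 2 := by
          simp only [hA]; ring
      _ ≤ m k * ‖ηhat k‖ ^ 2 := mul_le_mul_of_nonneg_right h hn
  have keyR : ∀ k, m k * ‖ηhat k‖ ^ 2 ≤ (1 + β) * A k := by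
    intro k
    have h := (key k).2
    have hn : (0:ℝ) ≤ ‖ηhat k‖ ^ 2 := by positivity
    calc m k * ‖ηhat k‖ ^ 2 ≤ ((1 + β) * (1 + (k.1 ^ 2 + k.2 ^ 2))) * ‖ηhat k‖ ^ 2 :=
          mul_le_mul_of_nonneg_right h hn
      _ = (1 + β) * A k := by simp only [hA]; ring
  have hBnn : ∀ k, 0 ≤ m k * ‖ηhat k‖ ^ 2 := by
    intro k
    refine le_trans ?_ (keyL k)
    have hA0 : 0 ≤ A k := by
      have : (0:ℝ) ≤ ‖ηhat k‖ ^ 2 := by positivity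
      have hq0 : (0:ℝ) ≤ 1 + (k.1 ^ 2 + k.2 ^ 2) := by positivity
      exact mul_nonneg hq0 this
    positivity
  -- measurability
  have hmeasN : Measurable fun k : ℝ × ℝ => ‖ηhat k‖ ^ 2 :=
    (hmeas.norm).pow_const 2
  have hmeasA : Measurable A := by
    apply Measurable.mul _ hmeasN
    exact (measurable_const.add ((measurable_fst.pow_const 2).add
      (measurable_snd.pow_const 2)))
  have hmeasm : Measurable m := by
    apply Measurable.sub
    · exact measurable_const.add (measurable_const.mul
        ((measurable_fst.pow_const 2).add (measurable_snd.pow_const 2)))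
    · apply Measurable.mul
      · apply Measurable.mul measurable_const
        exact (measurable_fst.pow_const 2).div
          ((measurable_fst.pow_const 2).add (measurable_snd.pow_const 2))
      · exact measurable_fcoth.comp
          (Real.continuous_sqrt.measurable.comp
            ((measurable_fst.pow_const 2).add (measurable_snd.pow_const 2)))
  -- integrability
  have hIntA : Integrable A := by
    refine (hInt.const_mul (1 / β)).mono' (hmeasA.aestronglyMeasurable) ?_
    filter_upwards with k
    have hn : (0:ℝ) ≤ ‖ηhat k‖ ^ 2 := by positivity
    have hq0' : (0:ℝ) ≤ 1 + (k.1 ^ 2 + k.2 ^ 2) := by positivity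
    have hA0 : 0 ≤ A k := mul_nonneg hq0' hn
    rw [Real.norm_of_nonneg hA0]
    have h1 : (1 : ℝ) + (k.1 ^ 2 + k.2 ^ 2) ≤
        (1 / β) * (1 + β * (k.1 ^ 2 + k.2 ^ 2)) := by
      rw [div_mul_eq_mul_div, le_div_iff₀ hβ0]
      nlinarith [sq_nonneg k.1, sq_nonneg k.2]
    calc A k = (1 + (k.1 ^ 2 + k.2 ^ 2)) * ‖ηhat k‖ ^ 2 := rfl
      _ ≤ (1 / β) * (1 + β * (k.1 ^ 2 + k.2 ^ 2)) * ‖ηhat k‖ ^ 2 :=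
          mul_le_mul_of_nonneg_right h1 hn
      _ = (1 / β) * ((1 + β * (k.1 ^ 2 + k.2 ^ 2)) * ‖ηhat k‖ ^ 2) := by ring
      _ ≤ 1 / β * ((1 + β * (k.1 ^ 2 + k.2 ^ 2)) * ‖ηhat k‖ ^ 2) := le_refl _
  have hIntB : Integrable (fun k => m k * ‖ηhat k‖ ^ 2) := by
    refine (hIntA.const_mul (1 + β)).mono'
      ((hmeasm.mul hmeasN).aestronglyMeasurable) ?_
    filter_upwards with k
    rw [Real.norm_of_nonneg (hBnn k)]
    exact keyR k
  constructor
  · calc (ε ^ 2 * β) * ∫ k, A k = ∫ k, (ε ^ 2 * β) * A k :=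
        (integral_const_mul _ _).symm
      _ ≤ ∫ k, m k * ‖ηhat k‖ ^ 2 :=
        integral_mono (hIntA.const_mul _) hIntB keyL
  · calc (∫ k, m k * ‖ηhat k‖ ^ 2) ≤ ∫ k, (1 + β) * A k :=
        integral_mono hIntB (hIntA.const_mul _) keyR
      _ = (1 + β) * ∫ k, A k := integral_const_mul _ _
end

section
/- Suppose T_ε : U_ε → ℝ is C¹ on an open subset U_ε of a Hilbert space, N_ε = {ζ ∈ U_ε : ζ ≠ 0, G_ε(ζ) = 0} with G_ε(ζ) = dT_ε[ζ](ζ), and suppose on N_ε one has the coercivity −dG_ε[ζ](ζ) = −d²T_ε[ζ](ζ,ζ) ≥ c‖ζ‖² and the lower bound ‖ζ‖ ≥ D₂ > 0. Then applying Ekeland's variational principle to T_ε restricted to N_ε yields a minimising sequence {ζ_n} ⊂ N_ε for T_ε|_{N_ε} with dT_ε[ζ_n] → 0 in the dual space as n → ∞. -/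
open Filter

open Asymptotics

lemma ekeland_weak {X : Type*} [NormedAddCommGroup X] [CompleteSpace X]
    (N : Set X) (hclosed : IsClosed N) (f : X → ℝ)
    (hf : ∀ x ∈ N, ContinuousAt f x)
    (hbdd : BddBelow (f '' N)) (hne : N.Nonempty)
    {ε : ℝ} (hε : 0 < ε) :
    ∃ ζ ∈ N, f ζ ≤ sInf (f '' N) + ε ∧ ∀ x ∈ N, f ζ ≤ f x + ε * ‖x - ζ‖ := by
  set m := sInf (f '' N) with hm
  have hmle : ∀ x ∈ N, m ≤ f x := fun x hx => csInf_le hbdd ⟨x, hx, rfl⟩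
  -- initial point
  obtain ⟨a, ⟨x₀, hx₀, rfl⟩, ha⟩ := Real.lt_sInf_add_pos (hne.image f) hε
  -- the nested sets
  set S : X → Set X := fun y => {x ∈ N | f x + ε * ‖x - y‖ ≤ f y} with hS
  have hself : ∀ y ∈ N, y ∈ S y := by
    intro y hy
    refine ⟨hy, ?_⟩
    simp
  have hSsub : ∀ y, S y ⊆ N := fun y x hx => hx.1
  have hSbdd : ∀ y, BddBelow (f '' S y) := fun y =>
    hbdd.mono (Set.image_mono (f := f) (hSsub y))
  have step : ∀ (k : ℕ) (y : {x // x ∈ N}), ∃ x : {x // x ∈ N},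
      (x : X) ∈ S (y : X) ∧ f x ≤ sInf (f '' S (y : X)) + (1/2 : ℝ) ^ k := by
    intro k y
    obtain ⟨b, ⟨x, hx, rfl⟩, hb⟩ := Real.lt_sInf_add_pos
      (⟨_, (y : X), hself y y.2, rfl⟩ : (f '' S (y : X)).Nonempty)
      (by positivity : (0:ℝ) < (1/2 : ℝ)^k)
    exact ⟨⟨x, hSsub _ hx⟩, hx, hb.le⟩
  choose next hnext1 hnext2 using step
  set u : ℕ → {x // x ∈ N} := fun k => Nat.rec ⟨x₀, hx₀⟩ (fun k y => next k y) k with hu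
  have hu0 : (u 0 : X) = x₀ := rfl
  have hustep : ∀ k, u (k + 1) = next k (u k) := fun k => rfl
  have hmemS : ∀ k, (u (k+1) : X) ∈ S (u k) := fun k => hnext1 k (u k)
  have hineq : ∀ k, f (u (k+1)) + ε * ‖(u (k+1) : X) - (u k : X)‖ ≤ f (u k) :=
    fun k => (hmemS k).2
  -- telescoping
  have htel : ∀ j k, j ≤ k → f (u k) + ε * ‖(u k : X) - (u j : X)‖ ≤ f (u j) := by
    intro j k hjk
    induction k, hjk using Nat.le_induction with
    | base => simp
    | succ k hjk ih =>
      have h1 := hineq k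
      have h2 : ‖(u (k+1) : X) - (u j : X)‖ ≤
          ‖(u (k+1) : X) - (u k : X)‖ + ‖(u k : X) - (u j : X)‖ :=
        norm_sub_le_norm_sub_add_norm_sub _ _ _
      nlinarith [hε.le]
  have hanti : Antitone fun k => f (u k) := antitone_nat_of_succ_le fun k => by
    have := hineq k; nlinarith [norm_nonneg ((u (k+1) : X) - (u k : X)), hε.le]
  have hblow : BddBelow (Set.range fun k => f (u k)) := by
    refine ⟨m, ?_⟩
    rintro b ⟨k, rfl⟩
    exact hmle _ (u k).2
  have hconv : Tendsto (fun k => f (u k)) atTop (nhds (⨅ k, f (u k))) :=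
    tendsto_atTop_ciInf hanti hblow
  have hcauchyf : CauchySeq fun k => f (u k) := hconv.cauchySeq
  have hcauchy : CauchySeq fun k => (u k : X) := by
    rw [Metric.cauchySeq_iff']
    intro η hη
    obtain ⟨K, hK⟩ := Metric.cauchySeq_iff'.mp hcauchyf (ε * η) (by positivity)
    refine ⟨K, fun n hn => ?_⟩
    have h1 := htel K n hn
    have h2 := hK n hn
    rw [Real.dist_eq] at h2
    rw [dist_eq_norm]
    have h3 : ε * ‖(u n : X) - (u K : X)‖ ≤ f (u K) - f (u n) := by linarith
    have h4 : f (u K) - f (u n) ≤ |f (u n) - f (u K)| := by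
      rw [abs_sub_comm]; exact le_abs_self _
    nlinarith [norm_nonneg ((u n : X) - (u K : X))]
  obtain ⟨ζ, hζ⟩ := cauchySeq_tendsto_of_complete hcauchy
  have hζN : ζ ∈ N := hclosed.mem_of_tendsto hζ (Eventually.of_forall fun k => (u k).2)
  have hfc : Tendsto (fun k => f (u k)) atTop (nhds (f ζ)) :=
    ((hf ζ hζN).tendsto).comp hζ
  -- limit inequality: for each k, f ζ + ε ‖ζ - u k‖ ≤ f (u k)
  have hlim : ∀ k, f ζ + ε * ‖ζ - (u k : X)‖ ≤ f (u k) := by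
    intro k
    have h1 : Tendsto (fun j => f (u j) + ε * ‖(u j : X) - (u k : X)‖) atTop
        (nhds (f ζ + ε * ‖ζ - (u k : X)‖)) := by
      refine hfc.add (Tendsto.const_mul _ ?_)
      exact (hζ.sub_const _).norm
    exact le_of_tendsto h1 (eventually_atTop.2 ⟨k, fun j hj => htel k j hj⟩)
  refine ⟨ζ, hζN, ?_, ?_⟩
  · have h0 := hlim 0
    rw [hu0] at h0
    nlinarith [norm_nonneg (ζ - x₀), hε.le]
  · by_contra h
    push_neg at h
    obtain ⟨x, hxN, hx⟩ := h
    set δ := f ζ - (f x + ε * ‖x - ζ‖) with hδ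
    have hδ0 : 0 < δ := by linarith
    have hxS : ∀ k, x ∈ S (u k) := by
      intro k
      refine ⟨hxN, ?_⟩
      have h2 : ‖x - (u k : X)‖ ≤ ‖x - ζ‖ + ‖ζ - (u k : X)‖ :=
        norm_sub_le_norm_sub_add_norm_sub _ _ _
      have h3 := hlim k
      nlinarith [hε.le]
    obtain ⟨K, hK⟩ := exists_pow_lt_of_lt_one hδ0 (by norm_num : (1/2 : ℝ) < 1)
    have h5 : sInf (f '' S (u K)) ≤ f x := csInf_le (hSbdd _) ⟨x, hxS K, rfl⟩
    have h6 : f (u (K+1)) ≤ f x + (1/2 : ℝ)^K := by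
      have := hnext2 K (u K)
      rw [← hustep K] at this
      linarith
    have h7 := hlim (K+1)
    nlinarith [norm_nonneg (ζ - (u (K+1) : X)), norm_nonneg (x - ζ), hε.le]


set_option maxHeartbeats 1000000 in
/-- Key step: at an Ekeland almost-minimiser on the natural constraint set, the full
derivative is small. -/
lemma key_bound {X : Type*} [NormedAddCommGroup X] [InnerProductSpace ℝ X] [CompleteSpace X]
    (U : Set X) (hU : IsOpen U) (T : X → ℝ)
    (DT : X → (X →L[ℝ] ℝ)) (DG : X → (X →L[ℝ] ℝ))
    (hT : ∀ ζ ∈ U, HasFDerivAt T (DT ζ) ζ)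
    (hG : ∀ ζ ∈ U, HasFDerivAt (fun ξ : X => DT ξ ξ) (DG ζ) ζ)
    (N : Set X) (hN : N = {ζ ∈ U | ζ ≠ 0 ∧ DT ζ ζ = 0})
    (c D₂ : ℝ) (hc : 0 < c) (hD₂ : 0 < D₂)
    (hcoer : ∀ ζ ∈ N, c * ‖ζ‖ ^ 2 ≤ -(DG ζ ζ))
    (hlow : ∀ ζ ∈ N, D₂ ≤ ‖ζ‖)
    (M : ℝ) (hM : ∀ ζ ∈ N, ‖DG ζ‖ ≤ M) (hM0 : 0 ≤ M)
    (ζ : X) (hζ : ζ ∈ N) (ε : ℝ) (hε : 0 < ε)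
    (hEk : ∀ x ∈ N, T ζ ≤ T x + ε * ‖x - ζ‖) :
    ‖DT ζ‖ ≤ ε * (1 + (M + c * D₂ ^ 2) / (c * D₂)) := by
  obtain ⟨C, hC⟩ : ∃ x : ℝ, x = 1 + (M + c * D₂ ^ 2) / (c * D₂) := ⟨_, rfl⟩
  rw [← hC]
  have hC0 : 0 < C := by rw [hC]; positivity
  obtain ⟨hζU, hζ0, hζcrit⟩ : ζ ∈ U ∧ ζ ≠ 0 ∧ DT ζ ζ = 0 := by rw [hN] at hζ; exact hζ
  have hζD : D₂ ≤ ‖ζ‖ := hlow ζ hζ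
  have hζn : 0 < ‖ζ‖ := lt_of_lt_of_le hD₂ hζD
  obtain ⟨a, hadef⟩ : ∃ x : ℝ, x = -(DG ζ ζ) := ⟨_, rfl⟩
  have haζ : c * ‖ζ‖ ^ 2 ≤ a := hadef ▸ hcoer ζ hζ
  have ha0 : 0 < a := lt_of_lt_of_le (by positivity) haζ
  -- main claim for unit vectors
  have claim : ∀ v : X, ‖v‖ = 1 → -(ε * C) ≤ DT ζ v := by
    intro v hv
    by_contra hcon
    push_neg at hcon
    obtain ⟨δ, hδ⟩ : ∃ x : ℝ, x = -(DT ζ v + ε * C) := ⟨_, rfl⟩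
    have hδ0 : 0 < δ := by rw [hδ]; linarith
    obtain ⟨β, hβ⟩ : ∃ x : ℝ, x = c * D₂ ^ 2 := ⟨_, rfl⟩
    have hβ0 : 0 < β := by rw [hβ]; positivity
    obtain ⟨K, hK⟩ : ∃ x : ℝ, x = (M + β) / a := ⟨_, rfl⟩
    have hK0 : 0 ≤ K := by rw [hK]; positivity
    obtain ⟨B, hB⟩ : ∃ x : ℝ, x = 1 + K * ‖ζ‖ := ⟨_, rfl⟩
    have hB1 : (1:ℝ) ≤ B := by rw [hB]; linarith [mul_nonneg hK0 hζn.le]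
    have hB0 : (0:ℝ) < B := by linarith
    have hBC : B ≤ C := by
      have h2a := mul_le_mul_of_nonneg_left hζD (mul_nonneg hc.le hζn.le)
      have h2b : c * D₂ * ‖ζ‖ ≤ c * ‖ζ‖ ^ 2 := by ring_nf; ring_nf at h2a; linarith
      have h2 : c * D₂ * ‖ζ‖ ≤ a := le_trans h2b haζ
      have h1 : K * ‖ζ‖ ≤ (M + β) / (c * D₂) := by
        rw [hK, div_mul_eq_mul_div, div_le_div_iff₀ ha0 (by positivity)]
        have h3 := mul_le_mul_of_nonneg_left h2 (by positivity : (0:ℝ) ≤ M + β)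
        nlinarith [h3]
      rw [hβ] at h1
      rw [hB, hC]
      linarith
    -- bound on |DG ζ v|
    have hDGv : |DG ζ v| ≤ M := by
      calc |DG ζ v| ≤ ‖DG ζ‖ * ‖v‖ := (DG ζ).le_opNorm v
        _ = ‖DG ζ‖ := by rw [hv, mul_one]
        _ ≤ M := hM ζ hζ
    have hKa : K * a = M + β := by rw [hK]; field_simp
    -- little-o for G
    have hGo := hasFDerivAt_iff_isLittleO_nhds_zero.mp (hG ζ hζU)
    have hGo' := (isLittleO_iff.mp hGo) (show (0:ℝ) < β / (2 * B) by positivity)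
    obtain ⟨r₁, hr₁0, hr₁⟩ := Metric.eventually_nhds_iff.mp hGo'
    -- little-o for T
    have hTo := hasFDerivAt_iff_isLittleO_nhds_zero.mp (hT ζ hζU)
    have hTo' := (isLittleO_iff.mp hTo) (show (0:ℝ) < δ / (2 * B) by positivity)
    obtain ⟨r₂, hr₂0, hr₂⟩ := Metric.eventually_nhds_iff.mp hTo'
    -- ball in U
    obtain ⟨r₃, hr₃0, hr₃⟩ := Metric.isOpen_iff.mp hU ζ hζU
    -- choose t
    obtain ⟨m₀, hm₀⟩ : ∃ x : ℝ, x = min (min r₁ r₂) (min r₃ ‖ζ‖) := ⟨_, rfl⟩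
    have hm₀0 : 0 < m₀ := by
      rw [hm₀]; apply lt_min <;> apply lt_min <;> assumption
    have hm₀1 : m₀ ≤ r₁ := hm₀ ▸ le_trans (min_le_left _ _) (min_le_left _ _)
    have hm₀2 : m₀ ≤ r₂ := hm₀ ▸ le_trans (min_le_left _ _) (min_le_right _ _)
    have hm₀3 : m₀ ≤ r₃ := hm₀ ▸ le_trans (min_le_right _ _) (min_le_left _ _)
    have hm₀4 : m₀ ≤ ‖ζ‖ := hm₀ ▸ le_trans (min_le_right _ _) (min_le_right _ _)
    obtain ⟨t, htdef⟩ : ∃ x : ℝ, x = m₀ / (2 * B) := ⟨_, rfl⟩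
    have ht0 : 0 < t := by rw [htdef]; positivity
    have htB : t * B = m₀ / 2 := by rw [htdef]; field_simp
    have htB1 : t * B < r₁ := by rw [htB]; linarith
    have htB2 : t * B < r₂ := by rw [htB]; linarith
    have htB3 : t * B < r₃ := by rw [htB]; linarith
    have htBζ : t * B < ‖ζ‖ := by rw [htB]; linarith
    -- the perturbation norm bound
    have hwbound : ∀ s : ℝ, |s| ≤ K * t → ‖t • v + s • ζ‖ ≤ t * B := by
      intro s hs
      calc ‖t • v + s • ζ‖ ≤ ‖t • v‖ + ‖s • ζ‖ := norm_add_le _ _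
        _ = t * 1 + |s| * ‖ζ‖ := by rw [norm_smul, norm_smul, hv, Real.norm_eq_abs,
              Real.norm_eq_abs, abs_of_pos ht0]
        _ ≤ t * 1 + K * t * ‖ζ‖ := by
              linarith [mul_le_mul_of_nonneg_right hs hζn.le]
        _ = t * B := by rw [hB]; ring
    -- points are in U
    have hmemU : ∀ s : ℝ, |s| ≤ K * t → ζ + (t • v + s • ζ) ∈ U := by
      intro s hs
      apply hr₃
      rw [Metric.mem_ball, dist_eq_norm]
      have h : ζ + (t • v + s • ζ) - ζ = t • v + s • ζ := by abel
      rw [h]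
      exact lt_of_le_of_lt (hwbound s hs) htB3
    -- G error bound
    have hGerr : ∀ s : ℝ, |s| ≤ K * t →
        |DT (ζ + (t • v + s • ζ)) (ζ + (t • v + s • ζ)) - (t * DG ζ v + s * DG ζ ζ)| ≤
          β * t / 2 := by
      intro s hs
      have h1 := hr₁ (y := t • v + s • ζ) (by
        rw [dist_zero_right]
        exact lt_of_le_of_lt (hwbound s hs) htB1)
      have h2 : DG ζ (t • v + s • ζ) = t * DG ζ v + s * DG ζ ζ := by
        rw [map_add, map_smul, map_smul]; rfl
      rw [hζcrit, sub_zero, h2] at h1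
      simp only [Real.norm_eq_abs] at h1
      calc |DT (ζ + (t • v + s • ζ)) (ζ + (t • v + s • ζ)) - (t * DG ζ v + s * DG ζ ζ)|
          ≤ β / (2 * B) * ‖t • v + s • ζ‖ := h1
        _ ≤ β / (2 * B) * (t * B) := by
            apply mul_le_mul_of_nonneg_left (hwbound s hs) (by positivity)
        _ = β * t / 2 := by field_simp
    -- φ and IVT
    obtain ⟨φ, hφ⟩ : ∃ f : ℝ → ℝ,
        f = fun s => DT (ζ + (t • v + s • ζ)) (ζ + (t • v + s • ζ)) := ⟨_, rfl⟩
    have hφcont : ContinuousOn φ (Set.Icc (-(K * t)) (K * t)) := by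
      intro s hs
      have hsabs : |s| ≤ K * t := abs_le.mpr ⟨hs.1, hs.2⟩
      have hcz : ContinuousAt (fun s : ℝ => ζ + (t • v + s • ζ)) s := by fun_prop
      rw [hφ]
      have hcomp : ContinuousAt ((fun ξ : X => DT ξ ξ) ∘ (fun s : ℝ => ζ + (t • v + s • ζ))) s :=
        ContinuousAt.comp (x := s) (f := fun s : ℝ => ζ + (t • v + s • ζ))
          ((hG _ (hmemU s hsabs)).continuousAt) hcz
      exact hcomp.continuousWithinAt
    have hKt0 : 0 ≤ K * t := by positivity
    have hφpos : β * t / 2 ≤ φ (-(K * t)) := by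
      have h1 := hGerr (-(K * t)) (by rw [abs_neg, abs_of_nonneg hKt0])
      have h2 : t * DG ζ v + (-(K * t)) * DG ζ ζ = t * DG ζ v + K * t * a := by
        rw [hadef]; ring
      rw [h2] at h1
      have h3 : t * β ≤ t * DG ζ v + K * t * a := by
        have h4 : K * t * a = t * (M + β) := by rw [mul_comm K t, mul_assoc, hKa]
        rw [h4]
        have h5 := mul_le_mul_of_nonneg_left (abs_le.mp hDGv).1 ht0.le
        linarith [h5]
      have := (abs_le.mp h1).1
      rw [hφ]
      simp only
      linarith
    have hφneg : φ (K * t) ≤ -(β * t / 2) := by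
      have h1 := hGerr (K * t) (by rw [abs_of_nonneg hKt0])
      have h2 : t * DG ζ v + (K * t) * DG ζ ζ = t * DG ζ v - K * t * a := by
        rw [hadef]; ring
      rw [h2] at h1
      have h3 : t * DG ζ v - K * t * a ≤ -(t * β) := by
        have h4 : K * t * a = t * (M + β) := by rw [mul_comm K t, mul_assoc, hKa]
        rw [h4]
        have h5 := mul_le_mul_of_nonneg_left (abs_le.mp hDGv).2 ht0.le
        linarith [h5]
      have := (abs_le.mp h1).2
      rw [hφ]
      simp only
      linarith
    have hβt : 0 < β * t := mul_pos hβ0 ht0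
    have hIVT : (0:ℝ) ∈ φ '' Set.Icc (-(K * t)) (K * t) := by
      apply intermediate_value_Icc' (by linarith : -(K * t) ≤ K * t) hφcont
      constructor
      · linarith [hφneg]
      · linarith [hφpos]
    obtain ⟨s₀, hs₀mem, hs₀⟩ := hIVT
    have hs₀abs : |s₀| ≤ K * t := abs_le.mpr ⟨hs₀mem.1, hs₀mem.2⟩
    obtain ⟨x, hx⟩ : ∃ y : X, y = ζ + (t • v + s₀ • ζ) := ⟨_, rfl⟩
    have hxζ : x - ζ = t • v + s₀ • ζ := by rw [hx]; abel
    have hxζn : ‖x - ζ‖ ≤ t * B := by rw [hxζ]; exact hwbound s₀ hs₀abs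
    have hxcrit : DT x x = 0 := by rw [hx, ← hs₀, hφ]
    have hxN : x ∈ N := by
      rw [hN]
      refine ⟨hx ▸ hmemU s₀ hs₀abs, ?_, hxcrit⟩
      intro h0
      have h5 : ‖ζ‖ = ‖x - ζ‖ := by rw [h0, zero_sub, norm_neg]
      rw [h5] at htBζ
      linarith [lt_of_le_of_lt hxζn htBζ, le_refl ‖x - ζ‖]
    -- T expansion
    have hTx : T x - T ζ - DT ζ (x - ζ) ≤ δ / (2 * B) * (t * B) := by
      have h1 := hr₂ (y := x - ζ) (by
        rw [dist_zero_right]; exact lt_of_le_of_lt hxζn htB2)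
      have h2 : ζ + (x - ζ) = x := by abel
      rw [h2] at h1
      simp only [Real.norm_eq_abs] at h1
      have h3 := (abs_le.mp h1).2
      calc T x - T ζ - DT ζ (x - ζ) ≤ δ / (2 * B) * ‖x - ζ‖ := h3
        _ ≤ δ / (2 * B) * (t * B) := by
            apply mul_le_mul_of_nonneg_left hxζn (by positivity)
    have hDTx : DT ζ (x - ζ) = t * DT ζ v := by
      rw [hxζ, map_add, map_smul, map_smul]
      simp [hζcrit]
    have hEkx := hEk x hxN
    have hfinal : δ / (2 * B) * (t * B) = δ * t / 2 := by field_simp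
    rw [hDTx, hfinal] at hTx
    -- conclude contradiction
    have h9 : T ζ ≤ T x + ε * (t * B) := by
      have := mul_le_mul_of_nonneg_left hxζn hε.le
      linarith [hEkx]
    have h10 : (0:ℝ) ≤ t * DT ζ v + δ * t / 2 + ε * (t * B) := by linarith
    have h11 : ε * (t * B) ≤ ε * (t * C) :=
      mul_le_mul_of_nonneg_left (mul_le_mul_of_nonneg_left hBC ht0.le) hε.le
    have h14 : t * DT ζ v + ε * (t * C) = -(δ * t) := by rw [hδ]; ring
    have h15 : 0 < δ * t := mul_pos hδ0 ht0
    linarith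
  -- deduce operator norm bound
  apply ContinuousLinearMap.opNorm_le_bound _ (by positivity)
  intro v
  rcases eq_or_ne v 0 with rfl | hv0
  · simp
  · have hnv : 0 < ‖v‖ := norm_pos_iff.mpr hv0
    have hwn : ‖(‖v‖⁻¹ • v)‖ = 1 := by
      rw [norm_smul, Real.norm_eq_abs, abs_inv, abs_of_pos hnv, inv_mul_cancel₀ hnv.ne']
    have hwn' : ‖-(‖v‖⁻¹ • v)‖ = 1 := by rw [norm_neg, hwn]
    have h1 := claim _ hwn
    have h2 := claim _ hwn'
    rw [map_neg] at h2
    have h3 : |DT ζ (‖v‖⁻¹ • v)| ≤ ε * C := abs_le.mpr ⟨by linarith, by linarith⟩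
    have h4 : DT ζ v = ‖v‖ * DT ζ (‖v‖⁻¹ • v) := by
      rw [map_smul]
      simp only [smul_eq_mul]
      field_simp
    rw [Real.norm_eq_abs, h4, abs_mul, abs_of_pos hnv]
    calc ‖v‖ * |DT ζ (‖v‖⁻¹ • v)| ≤ ‖v‖ * (ε * C) :=
          mul_le_mul_of_nonneg_left h3 (norm_nonneg v)
      _ = ε * C * ‖v‖ := by ring

/-- (Theorem `Existence of a good minimising sequence`.)  Under the
coercivity `−d²T_ε[ζ](ζ,ζ) ≥ c‖ζ‖²` and the lower bound `‖ζ‖ ≥ D₂` on the natural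
constraint set `N_ε = {ζ ∈ U : ζ ≠ 0, dT_ε[ζ](ζ) = 0}`, Ekeland's variational principle
yields a minimising sequence `{ζ_n} ⊂ N_ε` for `T_ε|_{N_ε}` with `dT_ε[ζ_n] → 0`. -/
theorem exists_palais_smale_minimising_sequence {X : Type*} [NormedAddCommGroup X]
    [InnerProductSpace ℝ X] [CompleteSpace X]
    (U : Set X) (hU : IsOpen U) (T : X → ℝ)
    (DT : X → (X →L[ℝ] ℝ)) (DG : X → (X →L[ℝ] ℝ))
    (hT : ∀ ζ ∈ U, HasFDerivAt T (DT ζ) ζ)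
    (hG : ∀ ζ ∈ U, HasFDerivAt (fun ξ : X => DT ξ ξ) (DG ζ) ζ)
    (N : Set X) (hN : N = {ζ ∈ U | ζ ≠ 0 ∧ DT ζ ζ = 0})
    (c D₂ : ℝ) (hc : 0 < c) (hD₂ : 0 < D₂)
    (hcoer : ∀ ζ ∈ N, c * ‖ζ‖ ^ 2 ≤ -(DG ζ ζ))
    (hlow : ∀ ζ ∈ N, D₂ ≤ ‖ζ‖)
    (hne : N.Nonempty) (hbdd : BddBelow (T '' N)) (hclosed : IsClosed N)
    (hDGbdd : ∃ M : ℝ, ∀ ζ ∈ N, ‖DG ζ‖ ≤ M) :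
    ∃ ζ : ℕ → X, (∀ n, ζ n ∈ N) ∧
      Tendsto (fun n => T (ζ n)) atTop (nhds (sInf (T '' N))) ∧
      Tendsto (fun n => ‖DT (ζ n)‖) atTop (nhds 0) := by
  obtain ⟨M, hM⟩ := hDGbdd
  have hM0 : 0 ≤ M := le_trans (norm_nonneg _) (hM _ hne.choose_spec)
  have hNU : N ⊆ U := by rw [hN]; exact fun x hx => hx.1
  have hcont : ∀ x ∈ N, ContinuousAt T x := fun x hx => (hT x (hNU hx)).continuousAt
  have hstep : ∀ n : ℕ, ∃ z ∈ N, T z ≤ sInf (T '' N) + 1 / (n + 1 : ℝ) ∧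
      ∀ x ∈ N, T z ≤ T x + 1 / (n + 1 : ℝ) * ‖x - z‖ := fun n =>
    ekeland_weak N hclosed T hcont hbdd hne (by positivity)
  choose ζ hζN hζT hζEk using hstep
  refine ⟨ζ, hζN, ?_, ?_⟩
  · have h1 : Tendsto (fun n : ℕ => sInf (T '' N) + 1 / (n + 1 : ℝ)) atTop
        (nhds (sInf (T '' N))) := by
      have := (tendsto_one_div_add_atTop_nhds_zero_nat : Tendsto (fun n : ℕ => 1 / ((n : ℝ) + 1)) atTop (nhds 0))
      simpa using tendsto_const_nhds.add this
    refine tendsto_of_tendsto_of_tendsto_of_le_of_le tendsto_const_nhds h1 ?_ ?_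
    · exact fun n => csInf_le hbdd ⟨ζ n, hζN n, rfl⟩
    · exact fun n => hζT n
  · have hkey : ∀ n : ℕ, ‖DT (ζ n)‖ ≤
        1 / (n + 1 : ℝ) * (1 + (M + c * D₂ ^ 2) / (c * D₂)) := fun n =>
      key_bound U hU T DT DG hT hG N hN c D₂ hc hD₂ hcoer hlow M hM hM0
        (ζ n) (hζN n) (1 / (n + 1 : ℝ)) (by positivity) (hζEk n)
    have h1 : Tendsto (fun n : ℕ => 1 / (n + 1 : ℝ) * (1 + (M + c * D₂ ^ 2) / (c * D₂)))
        atTop (nhds 0) := by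
      have := (tendsto_one_div_add_atTop_nhds_zero_nat : Tendsto (fun n : ℕ => 1 / ((n : ℝ) + 1)) atTop (nhds 0)).mul_const
        (1 + (M + c * D₂ ^ 2) / (c * D₂))
      simpa using this
    exact squeeze_zero (fun n => norm_nonneg _) hkey h1
end
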